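/- arXiv:2006.10825 — 5 statements merged into one kernel-verified Lean document; each statement's English description precedes it below -/
import Mathlib

section
/- Let (X,G) be a dynamical system over a σ-compact locally compact abelian group G, d a metric on X generating its topology, and (B_n) a Følner sequence in G. For x ∈ X the following are equivalent: (i) x is mean almost periodic; (ii) for every continuous f : X → ℂ the function f_x is a mean almost periodic function; (iii) the set {f ∈ C(X) : f_x is mean almost periodic} separates the points of the orbit closure of x; (iv) for every s ∈ G the function G → ℝ, t ↦ d(sx, tx), is mean almost periodic. -/
open MeasureTheory Filter Topology Set Pointwise

noncomputable section

namespace APPaper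

/-- A subset `A` of `G` is relatively dense if there is a compact `K ⊆ G` with
`G = ⋃_{a ∈ A} (a + K)`. -/
def RelDense {G : Type*} [AddCommGroup G] [TopologicalSpace G] (A : Set G) : Prop :=
  ∃ K : Set G, IsCompact K ∧ ∀ g : G, ∃ a ∈ A, g - a ∈ K

/-- A continuous character of `G`, i.e. a continuous homomorphism into the unit circle
(realized inside `ℂ`). -/
def IsChar {G : Type*} [AddCommGroup G] [TopologicalSpace G] (ξ : G → ℂ) : Prop :=
  Continuous ξ ∧ (∀ t, ‖ξ t‖ = 1) ∧ ∀ s t, ξ (s + t) = ξ s * ξ t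

/-- `B` is a Følner sequence (of open, relatively compact, nonempty sets) for the
measure `μ` on `G`. -/
structure IsFolner {G : Type*} [AddCommGroup G] [TopologicalSpace G] [MeasurableSpace G]
    (μ : Measure G) (B : ℕ → Set G) : Prop where
  isOpen : ∀ n, IsOpen (B n)
  nonempty : ∀ n, (B n).Nonempty
  relCompact : ∀ n, IsCompact (closure (B n))
  folner : ∀ t : G,
    Tendsto (fun n => (μ ((B n \ (t +ᵥ B n)) ∪ ((t +ᵥ B n) \ B n))).toReal / (μ (B n)).toReal)
      atTop (𝓝 0)

/-- The average `(1/|B n|) ∫_{B n} h` of a real valued function. -/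
def avg {G : Type*} [MeasurableSpace G] (μ : Measure G) (B : ℕ → Set G) (n : ℕ)
    (h : G → ℝ) : ℝ :=
  (μ (B n)).toReal⁻¹ * ∫ t in B n, h t ∂μ

/-- The average `(1/|B n|) ∫_{B n} h` of a complex valued function. -/
def avgC {G : Type*} [MeasurableSpace G] (μ : Measure G) (B : ℕ → Set G) (n : ℕ)
    (h : G → ℂ) : ℂ :=
  (μ (B n)).toReal⁻¹ • ∫ t in B n, h t ∂μ

/-- The upper mean `M̄(h) = limsup_n (1/|B n|) ∫_{B n} h` along the Følner sequence. -/
def upperMean {G : Type*} [MeasurableSpace G] (μ : Measure G) (B : ℕ → Set G) (h : G → ℝ) : ℝ :=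
  Filter.limsup (fun n => avg μ B n h) Filter.atTop

/-- The upper density `Dens(A) = M̄(1_A)` of a subset of `G`. -/
def upperDens {G : Type*} [MeasurableSpace G] (μ : Measure G) (B : ℕ → Set G) (A : Set G) : ℝ :=
  upperMean μ B (A.indicator fun _ => (1 : ℝ))

/-- `M̄_n(h) = sup_{r ∈ G} (1/|B n|) ∫_{B n + r} h`. -/
def supAvg {G : Type*} [AddCommGroup G] [MeasurableSpace G] (μ : Measure G) (B : ℕ → Set G)
    (n : ℕ) (h : G → ℝ) : ℝ :=
  ⨆ r : G, (μ (B n)).toReal⁻¹ * ∫ t in (r +ᵥ B n), h t ∂μ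

/-- A function `f : G → E` is mean almost periodic (w.r.t. `(B n)`) if for each `ε > 0` the set
of `t` with `M̄(‖f - f(· - t)‖) < ε` is relatively dense. -/
def MeanAPFun {G : Type*} [AddCommGroup G] [TopologicalSpace G] [MeasurableSpace G]
    (μ : Measure G) (B : ℕ → Set G) {E : Type*} [NormedAddCommGroup E] (f : G → E) : Prop :=
  ∀ ε : ℝ, 0 < ε → RelDense {t : G | upperMean μ B (fun s => ‖f s - f (s - t)‖) < ε}

/-- A function `f : G → ℂ` is Besicovitch almost periodic (w.r.t. `(B n)`) if it can be
approximated, in the seminorm `M̄(|·|)`, by finite linear combinations of continuous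
characters. -/
def BesicovitchAPFun {G : Type*} [AddCommGroup G] [TopologicalSpace G] [MeasurableSpace G]
    (μ : Measure G) (B : ℕ → Set G) (f : G → ℂ) : Prop :=
  ∀ ε : ℝ, 0 < ε → ∃ (k : ℕ) (ξ : Fin k → G → ℂ) (c : Fin k → ℂ),
    (∀ j, IsChar (ξ j)) ∧ upperMean μ B (fun s => ‖f s - ∑ j, c j * ξ j s‖) < ε

/-- A function `f : G → E` is Bohr almost periodic if for every `ε > 0` the set of `t` with
`‖f - f(· - t)‖_∞ < ε` is relatively dense. -/
def BohrAPFun {G : Type*} [AddCommGroup G] [TopologicalSpace G] {E : Type*}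
    [NormedAddCommGroup E] (f : G → E) : Prop :=
  ∀ ε : ℝ, 0 < ε → RelDense {t : G | (⨆ s : G, ‖f s - f (s - t)‖) < ε}

/-- The orbit `{t +ᵥ x : t ∈ G}` of a point. -/
def orbitSet (G : Type*) {X : Type*} [AddCommGroup G] [AddAction G X] (x : X) : Set X :=
  Set.range fun t : G => t +ᵥ x

/-- The averaged pseudometric `D(x,y) = M̄(s ↦ dist(s x, s y))`. -/
def avgDist {G : Type*} [AddCommGroup G] [MeasurableSpace G] {X : Type*} [PseudoMetricSpace X]
    [AddAction G X] (μ : Measure G) (B : ℕ → Set G) (x y : X) : ℝ :=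
  upperMean μ B fun s => dist (s +ᵥ x) (s +ᵥ y)

/-- A point `x` is mean almost periodic (w.r.t. the metric of `X` and `(B n)`) if for every
`ε > 0` the set `{t : D(x, t x) < ε}` is relatively dense. -/
def MeanAPPoint {G : Type*} [AddCommGroup G] [TopologicalSpace G] [MeasurableSpace G]
    {X : Type*} [PseudoMetricSpace X] [AddAction G X] (μ : Measure G) (B : ℕ → Set G)
    (x : X) : Prop :=
  ∀ ε : ℝ, 0 < ε → RelDense {t : G | avgDist μ B x (t +ᵥ x) < ε}

/-- Mean almost periodicity of a point with respect to an abstract metric `d` on `X`. -/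
def MeanAPPointWith {G : Type*} [AddCommGroup G] [TopologicalSpace G] [MeasurableSpace G]
    {X : Type*} [AddAction G X] (μ : Measure G) (B : ℕ → Set G) (d : X → X → ℝ)
    (x : X) : Prop :=
  ∀ ε : ℝ, 0 < ε → RelDense {t : G | upperMean μ B (fun s => d (s +ᵥ x) (s +ᵥ (t +ᵥ x))) < ε}

/-- A point `x` is Besicovitch almost periodic if `t ↦ f (t +ᵥ x)` is a Besicovitch almost
periodic function for every continuous `f : X → ℂ`. -/
def BesicovitchAPPoint {G : Type*} [AddCommGroup G] [TopologicalSpace G] [MeasurableSpace G]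
    {X : Type*} [TopologicalSpace X] [AddAction G X] (μ : Measure G) (B : ℕ → Set G)
    (x : X) : Prop :=
  ∀ f : C(X, ℂ), BesicovitchAPFun μ B fun t : G => f (t +ᵥ x)

/-- The averaged pseudometric `D_n(x,y) = M̄_n(s ↦ dist(s x, s y))` at level `n`. -/
def weylDist {G : Type*} [AddCommGroup G] [MeasurableSpace G] {X : Type*} [PseudoMetricSpace X]
    [AddAction G X] (μ : Measure G) (B : ℕ → Set G) (n : ℕ) (x y : X) : ℝ :=
  supAvg μ B n fun s => dist (s +ᵥ x) (s +ᵥ y)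

/-- A point `x` is Weyl almost periodic if for every `ε > 0` there is an `N` such that
`{t : D_N(x, t x) < ε}` is relatively dense. -/
def WeylAPPoint {G : Type*} [AddCommGroup G] [TopologicalSpace G] [MeasurableSpace G]
    {X : Type*} [PseudoMetricSpace X] [AddAction G X] (μ : Measure G) (B : ℕ → Set G)
    (x : X) : Prop :=
  ∀ ε : ℝ, 0 < ε → ∃ N : ℕ, RelDense {t : G | weylDist μ B N x (t +ᵥ x) < ε}

/-- A point `y` is generic for the measure `m` along `(B n)`. -/
def IsGeneric {G : Type*} [AddCommGroup G] [MeasurableSpace G] {X : Type*}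
    [TopologicalSpace X] [MeasurableSpace X] [AddAction G X] (μ : Measure G) (B : ℕ → Set G)
    (m : Measure X) (y : X) : Prop :=
  ∀ f : C(X, ℂ),
    Tendsto (fun n => avgC μ B n fun t => f (t +ᵥ y)) atTop (𝓝 (∫ z, f z ∂m))

/-- The measure `m` is invariant under the action of `G`. -/
def InvariantMeasure (G : Type*) [AddCommGroup G] {X : Type*} [MeasurableSpace X]
    [AddAction G X] (m : Measure X) : Prop :=
  ∀ t : G, MeasurePreserving (fun x : X => t +ᵥ x) m m

/-- The measure `m` is ergodic for the action of `G`. -/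
def ErgodicMeasure (G : Type*) [AddCommGroup G] {X : Type*} [MeasurableSpace X]
    [AddAction G X] (m : Measure X) : Prop :=
  ∀ A : Set X, MeasurableSet A → (∀ t : G, (fun x : X => t +ᵥ x) ⁻¹' A = A) →
    m A = 0 ∨ m A = 1

/-- `f` is an eigenfunction of `(X,G,m)` with eigenvalue the continuous character `ξ`. -/
def IsEigenfunctionWith {G : Type*} [AddCommGroup G] [TopologicalSpace G] {X : Type*}
    [MeasurableSpace X] [AddAction G X] (m : Measure X) (ξ : G → ℂ) (f : X → ℂ) : Prop :=
  IsChar ξ ∧ MemLp f 2 m ∧ ¬ f =ᵐ[m] (fun _ => (0 : ℂ)) ∧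
    ∀ t : G, (fun x => f (t +ᵥ x)) =ᵐ[m] fun x => ξ t * f x

/-- The set of eigenvalues of `(X,G,m)`. -/
def Eig (G : Type*) [AddCommGroup G] [TopologicalSpace G] {X : Type*} [MeasurableSpace X]
    [AddAction G X] (m : Measure X) : Set (G → ℂ) :=
  {ξ | ∃ f : X → ℂ, IsEigenfunctionWith m ξ f}

/-- `(X,G,m)` has pure point spectrum: `L²(X,m)` possesses an orthonormal (Hilbert) basis
consisting of eigenfunctions. -/
def PurePointSpectrum (G : Type*) [AddCommGroup G] [TopologicalSpace G] {X : Type*}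
    [MeasurableSpace X] [AddAction G X] (m : Measure X) : Prop :=
  ∃ (ι : Type) (b : HilbertBasis ι ℂ (Lp ℂ 2 m)), ∀ i : ι,
    ∃ (ξ : G → ℂ) (f : X → ℂ) (hf : MemLp f 2 m),
      IsEigenfunctionWith m ξ f ∧ b i = hf.toLp f

/-- Every eigenvalue of `(X,G,m)` admits a continuous eigenfunction. -/
def ContinuousEigenfunctions (G : Type*) [AddCommGroup G] [TopologicalSpace G] {X : Type*}
    [TopologicalSpace X] [MeasurableSpace X] [AddAction G X] (m : Measure X) : Prop :=
  ∀ ξ ∈ Eig G m, ∃ f : X → ℂ, Continuous f ∧ IsEigenfunctionWith m ξ f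

/-- The set of frequencies of a point `x`: those continuous characters `ξ` for which the
average `A((t ↦ f(t +ᵥ x)) ⋅ conj ξ)` exists and is nonzero for some `f ∈ C(X)`. -/
def Freq {G : Type*} [AddCommGroup G] [TopologicalSpace G] [MeasurableSpace G] {X : Type*}
    [TopologicalSpace X] [AddAction G X] (μ : Measure G) (B : ℕ → Set G) (x : X) :
    Set (G → ℂ) :=
  {ξ | IsChar ξ ∧ ∃ (f : C(X, ℂ)) (c : ℂ), c ≠ 0 ∧
    Tendsto (fun n => avgC μ B n fun t => f (t +ᵥ x) * (starRingEnd ℂ) (ξ t)) atTop (𝓝 c)}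

/-- Birkhoff's ergodic theorem holds along `(B n)` for `(X,G,m)`. -/
def BirkhoffAlong {G : Type*} [AddCommGroup G] [MeasurableSpace G] {X : Type*}
    [MeasurableSpace X] [AddAction G X] (μ : Measure G) (B : ℕ → Set G) (m : Measure X) :
    Prop :=
  ∀ f : X → ℂ, Integrable f m →
    ∀ᵐ x ∂m, Tendsto (fun n => avgC μ B n fun t => f (t +ᵥ x)) atTop (𝓝 (∫ z, f z ∂m))

/-- `e` is (a representative of) the orthogonal projection in `L²(X,m)` of `f` onto the
eigenspace of `ξ`: it belongs to the eigenspace and `f - e` is orthogonal to it. -/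
def IsProjOnEigenspace {G : Type*} [AddCommGroup G] {X : Type*} [MeasurableSpace X]
    [AddAction G X] (m : Measure X) (ξ : G → ℂ) (f e : X → ℂ) : Prop :=
  MemLp e 2 m ∧ (∀ t : G, (fun x => e (t +ᵥ x)) =ᵐ[m] fun x => ξ t * e x) ∧
    ∀ g : X → ℂ, MemLp g 2 m → (∀ t : G, (fun x => g (t +ᵥ x)) =ᵐ[m] fun x => ξ t * g x) →
      ∫ x, (f x - e x) * (starRingEnd ℂ) (g x) ∂m = 0

/-- `d` is a metric on the topological space `X` which generates its topology. -/
structure IsCompatMetric {X : Type*} [TopologicalSpace X] (d : X → X → ℝ) : Prop where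
  refl : ∀ x, d x x = 0
  eq_of : ∀ x y, d x y = 0 → x = y
  symm : ∀ x y, d x y = d y x
  triangle : ∀ x y z, d x z ≤ d x y + d y z
  nhds_basis : ∀ x : X, (𝓝 x).HasBasis (fun ε : ℝ => 0 < ε) fun ε => {y | d x y < ε}

/-- The metric `d̄(y,z) = sup_{s ∈ G} dist (s y) (s z)`. -/
def supDist (G : Type*) [AddCommGroup G] {X : Type*} [PseudoMetricSpace X] [AddAction G X]
    (y z : X) : ℝ :=
  ⨆ s : G, dist (s +ᵥ y) (s +ᵥ z)

/-- The function `f_x : t ↦ f (t +ᵥ x)` as a bounded continuous function on `G`. -/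
def fnAlong {G : Type*} [AddCommGroup G] [TopologicalSpace G] {X : Type*}
    [TopologicalSpace X] [CompactSpace X] [AddAction G X] [ContinuousVAdd G X]
    (f : C(X, ℂ)) (x : X) : BoundedContinuousFunction G ℂ :=
  BoundedContinuousFunction.ofNormedAddCommGroup (fun t => f (t +ᵥ x))
    (f.continuous.comp (continuous_vadd.comp (continuous_id.prodMk continuous_const)))
    ‖f‖ (fun t => f.norm_coe_le_norm _)

/-- The translate `F(· - t)` of a bounded continuous function on `G`. -/
def translateB {G : Type*} [AddCommGroup G] [TopologicalSpace G] [IsTopologicalAddGroup G]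
    (t : G) (F : BoundedContinuousFunction G ℂ) : BoundedContinuousFunction G ℂ :=
  F.compContinuous ⟨fun s => s - t, continuous_sub_right t⟩

/-- A bounded continuous function on `G` is weakly almost periodic if it is uniformly
continuous and its set of translates is relatively compact in the weak topology. -/
def WeaklyAPFun {G : Type*} [AddCommGroup G] [UniformSpace G] [IsUniformAddGroup G]
    (F : BoundedContinuousFunction G ℂ) : Prop :=
  UniformContinuous ⇑F ∧
    IsCompact (closure
      ((toWeakSpace ℂ (BoundedContinuousFunction G ℂ)) '' Set.range fun t : G => translateB t F))

/-- A point `x` is weakly almost periodic if `f_x` is weakly almost periodic for every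
continuous `f : X → ℂ`. -/
def WeaklyAPPoint (G : Type*) [AddCommGroup G] [UniformSpace G] [IsUniformAddGroup G]
    {X : Type*} [TopologicalSpace X] [CompactSpace X] [AddAction G X] [ContinuousVAdd G X]
    (x : X) : Prop :=
  ∀ f : C(X, ℂ), WeaklyAPFun (G := G) (fnAlong f x)

/-- A point `x` is Bohr almost periodic if `f_x` is Bohr almost periodic for every
continuous `f : X → ℂ`. -/
def BohrAPPoint (G : Type*) [AddCommGroup G] [TopologicalSpace G] {X : Type*}
    [TopologicalSpace X] [AddAction G X] (x : X) : Prop :=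
  ∀ f : C(X, ℂ), BohrAPFun fun t : G => f (t +ᵥ x)

/-- The function `f_t : x ↦ f (t +ᵥ x)` as a continuous function on `X`. -/
def translateCM {G : Type*} [AddCommGroup G] {X : Type*} [TopologicalSpace X] [AddAction G X]
    [ContinuousConstVAdd G X] (t : G) (f : C(X, ℂ)) : C(X, ℂ) :=
  f.comp ⟨fun x => t +ᵥ x, continuous_const_vadd t⟩

/-- `(X,G)` is a weakly almost periodic dynamical system: for every `f ∈ C(X)` the family
`{f_t : t ∈ G}` is relatively compact in the weak topology of `C(X)`. -/
def WeaklyAPSystem (G : Type*) (X : Type*) [AddCommGroup G] [TopologicalSpace X]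
    [CompactSpace X] [T2Space X] [AddAction G X] [ContinuousConstVAdd G X] : Prop :=
  ∀ f : C(X, ℂ),
    IsCompact (closure ((toWeakSpace ℂ C(X, ℂ)) '' Set.range fun t : G => translateCM t f))

/-! ### Auxiliary machinery for Statement 5 -/

section Aux5

open Filter MeasureTheory Set
open scoped ENNReal

/-- Real-valued bounded continuous functions (convenient bundle). -/
structure NiceR {G : Type*} [TopologicalSpace G] (h : G → ℝ) : Prop where
  cont : Continuous h
  bdd : ∃ C : ℝ, ∀ s, |h s| ≤ C

/-- Complex-valued bounded, uniformly continuous functions. -/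
structure GoodC {G : Type*} [AddCommGroup G] [TopologicalSpace G] (f : G → ℂ) :
    Prop where
  cont : Continuous f
  bdd : ∃ C : ℝ, ∀ s, ‖f s‖ ≤ C
  uc : ∀ ε : ℝ, 0 < ε → ∃ U ∈ 𝓝 (0 : G), ∀ u ∈ U, ∀ s, ‖f (s - u) - f s‖ ≤ ε

lemma norm_triple {E : Type*} [SeminormedAddCommGroup E] (a b c : E) :
    ‖a - c‖ ≤ ‖a - b‖ + ‖b - c‖ := by
  simpa [dist_eq_norm] using dist_triangle a b c

lemma eventually_list {α : Type*} {l : List α} {p : α → ℕ → Prop}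
    (h : ∀ a ∈ l, ∀ᶠ n in atTop, p a n) : ∀ᶠ n in atTop, ∀ a ∈ l, p a n := by
  induction l with
  | nil => exact Eventually.of_forall (by simp)
  | cons b l ih =>
    filter_upwards [h b (List.mem_cons_self),
      ih fun a ha => h a (List.mem_cons_of_mem b ha)] with n hb hl a ha
    rcases List.mem_cons.1 ha with rfl | ha'
    exacts [hb, hl a ha']

section Measure

variable {G : Type*} [AddCommGroup G] [TopologicalSpace G] [IsTopologicalAddGroup G] [T2Space G]
    [LocallyCompactSpace G] [SigmaCompactSpace G] [MeasurableSpace G] [BorelSpace G]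
    {μ : Measure G} [μ.IsAddHaarMeasure] {B : ℕ → Set G}

lemma measBn_lt_top (hB : IsFolner μ B) (n : ℕ) : μ (B n) < ∞ :=
  lt_of_le_of_lt (measure_mono subset_closure) (hB.relCompact n).measure_lt_top

lemma measBn_toReal_pos (hB : IsFolner μ B) (n : ℕ) : 0 < (μ (B n)).toReal :=
  ENNReal.toReal_pos ((hB.isOpen n).measure_pos μ (hB.nonempty n)).ne' (measBn_lt_top hB n).ne

lemma NiceR.integrableOn {h : G → ℝ} (hh : NiceR h) {S : Set G}
    (hS : μ S < ∞) : IntegrableOn h S μ := by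
  obtain ⟨C, hC⟩ := hh.bdd
  haveI : Fact (μ S < ∞) := ⟨hS⟩
  exact (integrable_const C).mono' hh.cont.aestronglyMeasurable.restrict
    (Eventually.of_forall fun s => by simpa [Real.norm_eq_abs] using hC s)

lemma niceR_const (c : ℝ) : NiceR (G := G) fun _ => c :=
  ⟨continuous_const, ⟨|c|, fun _ => le_rfl⟩⟩

lemma NiceR.const_add {h : G → ℝ} (hh : NiceR h) (c : ℝ) :
    NiceR fun s => c + h s := by
  obtain ⟨C, hC⟩ := hh.bdd
  exact ⟨continuous_const.add hh.cont,
    ⟨|c| + C, fun s => (abs_add_le _ _).trans (add_le_add le_rfl (hC s))⟩⟩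

lemma NiceR.add {h g : G → ℝ} (hh : NiceR h) (hg : NiceR g) :
    NiceR fun s => h s + g s := by
  obtain ⟨C, hC⟩ := hh.bdd
  obtain ⟨D, hD⟩ := hg.bdd
  exact ⟨hh.cont.add hg.cont,
    ⟨C + D, fun s => (abs_add_le _ _).trans (add_le_add (hC s) (hD s))⟩⟩

lemma NiceR.cmul {h : G → ℝ} (hh : NiceR h) (c : ℝ) :
    NiceR fun s => c * h s := by
  obtain ⟨C, hC⟩ := hh.bdd
  exact ⟨continuous_const.mul hh.cont,
    ⟨|c| * C, fun s => by
      rw [abs_mul]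
      exact mul_le_mul_of_nonneg_left (hC s) (abs_nonneg c)⟩⟩

lemma nice_list_sum {l : List (G → ℝ)} (hl : ∀ h ∈ l, NiceR h) :
    NiceR fun s => (l.map (fun h => h s)).sum := by
  induction l with
  | nil => simpa using niceR_const 0
  | cons f l ih =>
    have h1 := hl f (List.mem_cons_self)
    have h2 := ih fun h hh => hl h (List.mem_cons_of_mem f hh)
    simpa using h1.add h2

lemma avg_le_of_le (hB : IsFolner μ B) {h g : G → ℝ} (hh : NiceR h) (hg : NiceR g)
    (hle : ∀ s, h s ≤ g s) (n : ℕ) : avg μ B n h ≤ avg μ B n g :=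
  mul_le_mul_of_nonneg_left
    (setIntegral_mono (hh.integrableOn (measBn_lt_top hB n))
      (hg.integrableOn (measBn_lt_top hB n)) hle)
    (inv_nonneg.2 ENNReal.toReal_nonneg)

lemma avg_add (hB : IsFolner μ B) {h g : G → ℝ} (hh : NiceR h) (hg : NiceR g) (n : ℕ) :
    avg μ B n (fun s => h s + g s) = avg μ B n h + avg μ B n g := by
  unfold avg
  rw [integral_add (hh.integrableOn (measBn_lt_top hB n)) (hg.integrableOn (measBn_lt_top hB n)),
    mul_add]

lemma avg_const (hB : IsFolner μ B) (c : ℝ) (n : ℕ) :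
    avg μ B n (fun _ => c) = c := by
  unfold avg
  rw [setIntegral_const, smul_eq_mul, measureReal_def, inv_mul_cancel_left₀ (measBn_toReal_pos hB n).ne']

lemma avg_cmul (c : ℝ) (h : G → ℝ) (n : ℕ) :
    avg μ B n (fun s => c * h s) = c * avg μ B n h := by
  unfold avg
  rw [integral_const_mul]
  ring

lemma abs_avg_le (hB : IsFolner μ B) {h : G → ℝ} {C : ℝ}
    (hC : ∀ s, |h s| ≤ C) (n : ℕ) : |avg μ B n h| ≤ C := by
  have h1 : ‖∫ t in B n, h t ∂μ‖ ≤ C * (μ (B n)).toReal :=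
    norm_setIntegral_le_of_norm_le_const_ae (measBn_lt_top hB n)
      (Eventually.of_forall fun s => by simpa [Real.norm_eq_abs] using hC s)
  have h2 : (0:ℝ) ≤ (μ (B n)).toReal⁻¹ := inv_nonneg.2 ENNReal.toReal_nonneg
  calc |avg μ B n h| = (μ (B n)).toReal⁻¹ * |∫ t in B n, h t ∂μ| := by
        rw [avg, abs_mul, abs_of_nonneg h2]
    _ ≤ (μ (B n)).toReal⁻¹ * (C * (μ (B n)).toReal) :=
        mul_le_mul_of_nonneg_left (by simpa [Real.norm_eq_abs] using h1) h2
    _ = C := by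
        field_simp [(measBn_toReal_pos hB n).ne']

lemma bddUnder_le (hB : IsFolner μ B) {h : G → ℝ} (hh : NiceR h) :
    IsBoundedUnder (· ≤ ·) atTop fun n => avg μ B n h := by
  obtain ⟨C, hC⟩ := hh.bdd
  exact isBoundedUnder_of ⟨C, fun n => (abs_le.1 (abs_avg_le hB hC n)).2⟩

lemma bddUnder_ge (hB : IsFolner μ B) {h : G → ℝ} (hh : NiceR h) :
    IsBoundedUnder (· ≥ ·) atTop fun n => avg μ B n h := by
  obtain ⟨C, hC⟩ := hh.bdd
  exact isBoundedUnder_of ⟨-C, fun n => (abs_le.1 (abs_avg_le hB hC n)).1⟩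

lemma cobddUnder (hB : IsFolner μ B) {h : G → ℝ} (hh : NiceR h) :
    IsCoboundedUnder (· ≤ ·) atTop fun n => avg μ B n h :=
  (bddUnder_ge hB hh).isCoboundedUnder_le

lemma upperMean_le_of_eventually (hB : IsFolner μ B) {h : G → ℝ} (hh : NiceR h) {a : ℝ}
    (hev : ∀ᶠ n in atTop, avg μ B n h ≤ a) : upperMean μ B h ≤ a :=
  limsup_le_of_le (cobddUnder hB hh) hev

lemma eventually_avg_lt (hB : IsFolner μ B) {h : G → ℝ} (hh : NiceR h) {a : ℝ}
    (ha : upperMean μ B h < a) : ∀ᶠ n in atTop, avg μ B n h < a :=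
  eventually_lt_of_limsup_lt ha (bddUnder_le hB hh)

lemma upperMean_mono (hB : IsFolner μ B) {h g : G → ℝ} (hh : NiceR h) (hg : NiceR g)
    (hle : ∀ s, h s ≤ g s) : upperMean μ B h ≤ upperMean μ B g :=
  limsup_le_limsup (Eventually.of_forall fun n => avg_le_of_le hB hh hg hle n)
    (cobddUnder hB hh) (bddUnder_le hB hg)

lemma limsup_le_limsup_of_sub_tendsto {a b : ℕ → ℝ}
    (hab : Tendsto (fun n => a n - b n) atTop (𝓝 0))
    (hage : IsBoundedUnder (· ≥ ·) atTop a)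
    (hble : IsBoundedUnder (· ≤ ·) atTop b)
    (hbge : IsBoundedUnder (· ≥ ·) atTop b) :
    limsup a atTop ≤ limsup b atTop := by
  refine le_of_forall_pos_le_add fun ε hε => ?_
  have hev : ∀ᶠ n in atTop, a n ≤ b n + ε := by
    filter_upwards [hab.eventually_lt_const hε] with n hn
    linarith
  have hble' : IsBoundedUnder (· ≤ ·) atTop fun n => b n + ε := by
    obtain ⟨c, hc⟩ := hble
    refine ⟨c + ε, ?_⟩
    rw [eventually_map] at hc ⊢
    filter_upwards [hc] with n hn using add_le_add_left hn ε
  calc limsup a atTop ≤ limsup (fun n => b n + ε) atTop :=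
        limsup_le_limsup hev hage.isCoboundedUnder_le hble'
    _ = limsup b atTop + ε :=
        limsup_add_const atTop b ε hble hbge.isCoboundedUnder_le

lemma limsup_eq_of_sub_tendsto {a b : ℕ → ℝ}
    (hab : Tendsto (fun n => a n - b n) atTop (𝓝 0))
    (hale : IsBoundedUnder (· ≤ ·) atTop a) (hage : IsBoundedUnder (· ≥ ·) atTop a)
    (hble : IsBoundedUnder (· ≤ ·) atTop b) (hbge : IsBoundedUnder (· ≥ ·) atTop b) :
    limsup a atTop = limsup b atTop := by
  refine le_antisymm (limsup_le_limsup_of_sub_tendsto hab hage hble hbge) ?_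
  have hab' : Tendsto (fun n => b n - a n) atTop (𝓝 0) := by
    have : (fun n => b n - a n) = fun n => -(a n - b n) := by funext n; ring
    rw [this, ← neg_zero]
    exact hab.neg
  exact limsup_le_limsup_of_sub_tendsto hab' hbge hale hage

lemma setIntegral_translate {h : G → ℝ} (t : G) (n : ℕ) :
    ∫ s in B n, h (s - t) ∂μ = ∫ s in (-t) +ᵥ B n, h s ∂μ := by
  haveI : μ.IsAddRightInvariant := ⟨fun g => by
    have hfun : (fun x : G => x + g) = fun x => g + x := funext fun x => add_comm x g
    rw [hfun]
    exact map_add_left_eq_self μ g⟩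
  have mp : MeasurePreserving (fun s : G => s - t) μ μ := measurePreserving_sub_right μ t
  have emb : MeasurableEmbedding (fun s : G => s - t) :=
    (MeasurableEquiv.subRight t).measurableEmbedding
  have hpre : (fun s : G => s - t) ⁻¹' ((-t) +ᵥ B n) = B n := by
    ext s
    rw [Set.mem_preimage, Set.mem_vadd_set_iff_neg_vadd_mem]
    have hst : -(-t) +ᵥ (s - t) = s := by
      rw [neg_neg, vadd_eq_add]
      abel
    rw [hst]
  calc ∫ s in B n, h (s - t) ∂μ
      = ∫ s in (fun s : G => s - t) ⁻¹' ((-t) +ᵥ B n), h (s - t) ∂μ := by rw [hpre]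
    _ = ∫ s in (-t) +ᵥ B n, h s ∂μ := mp.setIntegral_preimage_emb emb h _

lemma avg_translate_sub_tendsto (hB : IsFolner μ B) {h : G → ℝ} {C : ℝ}
    (hCb : ∀ s, |h s| ≤ C) (hc : Continuous h) (t : G) :
    Tendsto (fun n => avg μ B n (fun s => h (s - t)) - avg μ B n h) atTop (𝓝 0) := by
  have hnice : NiceR h := ⟨hc, ⟨C, hCb⟩⟩
  have key : ∀ n, |avg μ B n (fun s => h (s - t)) - avg μ B n h| ≤
      C * ((μ ((B n \ ((-t) +ᵥ B n)) ∪ (((-t) +ᵥ B n) \ B n))).toReal / (μ (B n)).toReal) := by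
    intro n
    set A := B n with hA_def
    set A' := (-t) +ᵥ B n with hA'_def
    have hA : MeasurableSet A := (hB.isOpen n).measurableSet
    have hA' : MeasurableSet A' := ((hB.isOpen n).vadd (-t)).measurableSet
    have hfinA : μ A < ∞ := measBn_lt_top hB n
    have hfinA' : μ A' < ∞ := by
      rw [hA'_def, measure_vadd]
      exact hfinA
    have intA : IntegrableOn h A μ := hnice.integrableOn hfinA
    have intA' : IntegrableOn h A' μ := hnice.integrableOn hfinA'
    have e1 : ∫ s in A, h s ∂μ = (∫ s in A ∩ A', h s ∂μ) + ∫ s in A \ A', h s ∂μ :=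
      (integral_inter_add_diff hA' intA).symm
    have e2 : ∫ s in A', h s ∂μ = (∫ s in A ∩ A', h s ∂μ) + ∫ s in A' \ A, h s ∂μ := by
      rw [inter_comm]
      exact (integral_inter_add_diff hA intA').symm
    have b1 : |∫ s in A \ A', h s ∂μ| ≤ C * (μ (A \ A')).toReal := by
      have := norm_setIntegral_le_of_norm_le_const_ae (μ := μ) (s := A \ A') (C := C) (f := h)
        ((measure_mono diff_subset).trans_lt hfinA)
        (Eventually.of_forall fun s => by simpa [Real.norm_eq_abs] using hCb s)
      simpa [Real.norm_eq_abs, measureReal_def] using this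
    have b2 : |∫ s in A' \ A, h s ∂μ| ≤ C * (μ (A' \ A)).toReal := by
      have := norm_setIntegral_le_of_norm_le_const_ae (μ := μ) (s := A' \ A) (C := C) (f := h)
        ((measure_mono diff_subset).trans_lt hfinA')
        (Eventually.of_forall fun s => by simpa [Real.norm_eq_abs] using hCb s)
      simpa [Real.norm_eq_abs, measureReal_def] using this
    have hmeasΔ : (μ ((A \ A') ∪ (A' \ A))).toReal
        = (μ (A \ A')).toReal + (μ (A' \ A)).toReal := by
      rw [measure_union disjoint_sdiff_sdiff (hA'.diff hA)]
      exact ENNReal.toReal_add ((measure_mono diff_subset).trans_lt hfinA).ne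
        ((measure_mono diff_subset).trans_lt hfinA').ne
    have havg : avg μ B n (fun s => h (s - t)) - avg μ B n h
        = (μ (B n)).toReal⁻¹ * ((∫ s in A', h s ∂μ) - ∫ s in A, h s ∂μ) := by
      rw [avg, avg, setIntegral_translate, mul_sub]
    have hint : |(∫ s in A', h s ∂μ) - ∫ s in A, h s ∂μ|
        ≤ C * (μ ((A \ A') ∪ (A' \ A))).toReal := by
      have : (∫ s in A', h s ∂μ) - ∫ s in A, h s ∂μ
          = (∫ s in A' \ A, h s ∂μ) - ∫ s in A \ A', h s ∂μ := by
        rw [e1, e2]; ring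
      rw [this, hmeasΔ, mul_add]
      exact (abs_sub _ _).trans (by linarith)
    rw [havg, abs_mul, abs_of_nonneg (inv_nonneg.2 ENNReal.toReal_nonneg), div_eq_inv_mul,
      ← mul_assoc, mul_comm C ((μ (B n)).toReal)⁻¹, mul_assoc]
    exact mul_le_mul_of_nonneg_left hint (inv_nonneg.2 ENNReal.toReal_nonneg)
  have hlim : Tendsto (fun n =>
      C * ((μ ((B n \ ((-t) +ᵥ B n)) ∪ (((-t) +ᵥ B n) \ B n))).toReal / (μ (B n)).toReal))
      atTop (𝓝 0) := by
    have := (hB.folner (-t)).const_mul C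
    simpa using this
  exact squeeze_zero_norm (fun n => by simpa [Real.norm_eq_abs] using key n) hlim

lemma upperMean_translate (hB : IsFolner μ B) {h : G → ℝ} {C : ℝ}
    (hc : Continuous h) (hCb : ∀ s, |h s| ≤ C) (t : G) :
    upperMean μ B (fun s => h (s - t)) = upperMean μ B h := by
  have hnice : NiceR h := ⟨hc, ⟨C, hCb⟩⟩
  have hnice' : NiceR fun s => h (s - t) :=
    ⟨hc.comp (continuous_sub_right t), ⟨C, fun s => hCb _⟩⟩
  exact limsup_eq_of_sub_tendsto (avg_translate_sub_tendsto hB hCb hc t)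
    (bddUnder_le hB hnice') (bddUnder_ge hB hnice') (bddUnder_le hB hnice) (bddUnder_ge hB hnice)

end Measure

end Aux5

section Aux5b

open Filter MeasureTheory Set
open scoped ENNReal Pointwise

variable {G : Type*} [AddCommGroup G] [TopologicalSpace G] [IsTopologicalAddGroup G] [T2Space G]
    [LocallyCompactSpace G] [SigmaCompactSpace G] [MeasurableSpace G] [BorelSpace G]
    {μ : Measure G} [μ.IsAddHaarMeasure] {B : ℕ → Set G}

lemma RelDense.mono' {A A' : Set G} (hsub : A ⊆ A') (h : RelDense A) : RelDense A' := by
  obtain ⟨K, hK, hcov⟩ := h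
  exact ⟨K, hK, fun g => by obtain ⟨a, ha, hk⟩ := hcov g; exact ⟨a, hsub ha, hk⟩⟩

lemma RelDense.neg' {A : Set G} (h : RelDense A) : RelDense {t : G | -t ∈ A} := by
  obtain ⟨K, hK, hcov⟩ := h
  refine ⟨(fun k : G => -k) '' K, hK.image continuous_neg, fun g => ?_⟩
  obtain ⟨a, ha, hk⟩ := hcov (-g)
  refine ⟨-a, by simpa using ha, ⟨-g - a, hk, by abel⟩⟩

lemma GoodC.niceDiff {f : G → ℂ} (hf : GoodC f) (a b : G) :
    NiceR fun s => ‖f (s - a) - f (s - b)‖ := by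
  obtain ⟨C, hC⟩ := hf.bdd
  refine ⟨((hf.cont.comp (continuous_sub_right a)).sub
    (hf.cont.comp (continuous_sub_right b))).norm, ⟨C + C, fun s => ?_⟩⟩
  rw [abs_of_nonneg (norm_nonneg _)]
  exact (norm_sub_le _ _).trans (add_le_add (hC _) (hC _))

lemma GoodC.niceDiff0 {f : G → ℂ} (hf : GoodC f) (a : G) :
    NiceR fun s => ‖f (s - a) - f s‖ := by
  obtain ⟨C, hC⟩ := hf.bdd
  refine ⟨((hf.cont.comp (continuous_sub_right a)).sub hf.cont).norm, ⟨C + C, fun s => ?_⟩⟩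
  rw [abs_of_nonneg (norm_nonneg _)]
  exact (norm_sub_le _ _).trans (add_le_add (hC _) (hC _))

lemma GoodC.niceDiff0' {f : G → ℂ} (hf : GoodC f) (a : G) :
    NiceR fun s => ‖f s - f (s - a)‖ := by
  have := hf.niceDiff0 a
  refine ⟨?_, ?_⟩
  · have : (fun s => ‖f s - f (s - a)‖) = fun s => ‖f (s - a) - f s‖ := by
      funext s; rw [norm_sub_rev]
    rw [this]
    exact (hf.niceDiff0 a).cont
  · obtain ⟨C, hC⟩ := (hf.niceDiff0 a).bdd
    exact ⟨C, fun s => by rw [norm_sub_rev]; exact hC s⟩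

lemma Mdiff_shift (hB : IsFolner μ B) {f : G → ℂ} (hf : GoodC f) (g k : G) :
    upperMean μ B (fun s => ‖f (s - g) - f (s - k)‖)
      = upperMean μ B (fun s => ‖f (s - (g - k)) - f s‖) := by
  obtain ⟨C, hC⟩ := (hf.niceDiff0 (g - k)).bdd
  have h1 : (fun s => ‖f (s - g) - f (s - k)‖)
      = fun s => ‖f ((s - k) - (g - k)) - f (s - k)‖ := by
    funext s
    rw [show (s - k) - (g - k) = s - g by abel]
  rw [h1]
  exact upperMean_translate hB (hf.niceDiff0 (g - k)).cont hC k

lemma tbnet (hB : IsFolner μ B) {f : G → ℂ} (hf : GoodC f) (hap : MeanAPFun μ B f) :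
    ∀ ε : ℝ, 0 < ε → ∃ T : Finset G, ∀ g : G, ∃ t ∈ T,
      upperMean μ B (fun s => ‖f (s - g) - f (s - t)‖) < ε := by
  intro ε hε
  obtain ⟨K, hK, hcov⟩ := hap (ε/3) (by positivity)
  obtain ⟨U, hU, hUc⟩ := hf.uc (ε/3) (by positivity)
  obtain ⟨V, hVU, hVo, hV0⟩ := mem_nhds_iff.1 hU
  have hcover : K ⊆ ⋃ k ∈ K, k +ᵥ V := fun k hk => by
    apply Set.mem_biUnion hk
    rw [Set.mem_vadd_set_iff_neg_vadd_mem]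
    simpa [vadd_eq_add] using hV0
  obtain ⟨T₀, hT₀K, hT₀fin, hT₀cov⟩ :=
    hK.elim_finite_subcover_image (fun k _ => hVo.vadd k) hcover
  classical
  refine ⟨hT₀fin.toFinset, fun g => ?_⟩
  obtain ⟨a, haA, haK⟩ := hcov g
  obtain ⟨k, hkT₀, hk⟩ := Set.mem_iUnion₂.1 (hT₀cov haK)
  have hu : -k + (g - a) ∈ V := by
    have := Set.mem_vadd_set_iff_neg_vadd_mem.1 hk
    simpa [vadd_eq_add] using this
  refine ⟨k, hT₀fin.mem_toFinset.2 hkT₀, ?_⟩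
  rw [Mdiff_shift hB hf g k]
  set u := -k + (g - a) with hu_def
  have hbd : ∀ s, ‖f (s - (g - k)) - f s‖ ≤ ε/3 + ‖f s - f (s - a)‖ := by
    intro s
    have h1 : ‖f ((s - a) - u) - f (s - a)‖ ≤ ε/3 := hUc u (hVU hu) (s - a)
    have h2 : s - (g - k) = (s - a) - u := by rw [hu_def]; abel
    calc ‖f (s - (g - k)) - f s‖
        ≤ ‖f (s - (g - k)) - f (s - a)‖ + ‖f (s - a) - f s‖ := norm_triple _ _ _
      _ ≤ ε/3 + ‖f s - f (s - a)‖ := by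
          rw [h2, norm_sub_rev (f (s - a))]
          exact add_le_add h1 le_rfl
  have hnice1 : NiceR fun s => ‖f (s - (g - k)) - f s‖ := hf.niceDiff0 (g - k)
  have hnice2 : NiceR fun s => ‖f s - f (s - a)‖ := hf.niceDiff0' a
  have hMa : upperMean μ B (fun s => ‖f s - f (s - a)‖) < ε/3 := haA
  have hev := eventually_avg_lt hB hnice2 hMa
  have hfinal : upperMean μ B (fun s => ‖f (s - (g - k)) - f s‖) ≤ ε/3 + ε/3 := by
    apply upperMean_le_of_eventually hB hnice1
    filter_upwards [hev] with n hn
    calc avg μ B n (fun s => ‖f (s - (g - k)) - f s‖)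
        ≤ avg μ B n (fun s => ε/3 + ‖f s - f (s - a)‖) :=
          avg_le_of_le hB hnice1 (hnice2.const_add (ε/3)) hbd n
      _ = ε/3 + avg μ B n (fun s => ‖f s - f (s - a)‖) := by
          rw [avg_add hB (niceR_const (ε/3)) hnice2, avg_const hB]
      _ ≤ ε/3 + ε/3 := by linarith
  linarith

lemma jointTB (hB : IsFolner μ B) (L : List (G → ℂ))
    (hL : ∀ f ∈ L, GoodC f ∧ MeanAPFun μ B f) :
    ∀ ε : ℝ, 0 < ε → ∃ T : Finset G, ∀ g : G, ∃ t ∈ T, ∀ f ∈ L,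
      upperMean μ B (fun s => ‖f (s - g) - f (s - t)‖) < ε := by
  classical
  induction L with
  | nil =>
    intro ε hε
    exact ⟨{0}, fun g => ⟨0, Finset.mem_singleton_self 0, fun f hf => absurd hf (by simp)⟩⟩
  | cons f L ih =>
    intro ε hε
    obtain ⟨T₁, hT₁⟩ := ih (fun f' hf' => hL f' (List.mem_cons_of_mem _ hf')) (ε/3) (by positivity)
    obtain ⟨hfg, hfap⟩ := hL f (List.mem_cons_self)
    obtain ⟨T₂, hT₂⟩ := tbnet hB hfg hfap (ε/3) (by positivity)
    set S : G → G → Set G := fun t₁ t₂ =>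
      {g | (∀ f' ∈ L, upperMean μ B (fun s => ‖f' (s - g) - f' (s - t₁)‖) < ε/3) ∧
        upperMean μ B (fun s => ‖f (s - g) - f (s - t₂)‖) < ε/3} with hS_def
    refine ⟨(T₁ ×ˢ T₂).biUnion (fun p =>
      if h : (S p.1 p.2).Nonempty then {h.some} else ∅), fun g => ?_⟩
    obtain ⟨t₁, ht₁T, ht₁⟩ := hT₁ g
    obtain ⟨t₂, ht₂T, ht₂⟩ := hT₂ g
    have hne : (S t₁ t₂).Nonempty := ⟨g, ht₁, ht₂⟩
    set r := hne.some with hr_def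
    have hrS : r ∈ S t₁ t₂ := hne.some_mem
    refine ⟨r, ?_, ?_⟩
    · apply Finset.mem_biUnion.2
      refine ⟨(t₁, t₂), Finset.mem_product.2 ⟨ht₁T, ht₂T⟩, ?_⟩
      rw [dif_pos hne]
      exact Finset.mem_singleton_self _
    · intro f' hf'
      rcases List.mem_cons.1 hf' with rfl | hmem
      · -- head
        have hga : GoodC f' := hfg
        have h1 : upperMean μ B (fun s => ‖f' (s - g) - f' (s - t₂)‖) < ε/3 := ht₂
        have h2 : upperMean μ B (fun s => ‖f' (s - t₂) - f' (s - r)‖) < ε/3 := by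
          have := hrS.2
          have heq : (fun s => ‖f' (s - t₂) - f' (s - r)‖)
              = fun s => ‖f' (s - r) - f' (s - t₂)‖ := by
            funext s; rw [norm_sub_rev]
          rw [heq]
          exact this
        have htri : upperMean μ B (fun s => ‖f' (s - g) - f' (s - r)‖)
            ≤ ε/3 + ε/3 := by
          apply upperMean_le_of_eventually hB (hga.niceDiff g r)
          filter_upwards [eventually_avg_lt hB (hga.niceDiff g t₂) h1,
            eventually_avg_lt hB (hga.niceDiff t₂ r) h2] with n hn1 hn2
          calc avg μ B n (fun s => ‖f' (s - g) - f' (s - r)‖)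
              ≤ avg μ B n (fun s => ‖f' (s - g) - f' (s - t₂)‖ + ‖f' (s - t₂) - f' (s - r)‖) :=
                avg_le_of_le hB (hga.niceDiff g r)
                  ((hga.niceDiff g t₂).add (hga.niceDiff t₂ r))
                  (fun s => norm_triple _ _ _) n
            _ = avg μ B n (fun s => ‖f' (s - g) - f' (s - t₂)‖)
                + avg μ B n (fun s => ‖f' (s - t₂) - f' (s - r)‖) :=
                avg_add hB (hga.niceDiff g t₂) (hga.niceDiff t₂ r) n
            _ ≤ ε/3 + ε/3 := by linarith
        linarith
      · -- tail
        have hga : GoodC f' := (hL f' (List.mem_cons_of_mem _ hmem)).1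
        have h1 : upperMean μ B (fun s => ‖f' (s - g) - f' (s - t₁)‖) < ε/3 := ht₁ f' hmem
        have h2 : upperMean μ B (fun s => ‖f' (s - t₁) - f' (s - r)‖) < ε/3 := by
          have := hrS.1 f' hmem
          have heq : (fun s => ‖f' (s - t₁) - f' (s - r)‖)
              = fun s => ‖f' (s - r) - f' (s - t₁)‖ := by
            funext s; rw [norm_sub_rev]
          rw [heq]
          exact this
        have htri : upperMean μ B (fun s => ‖f' (s - g) - f' (s - r)‖)
            ≤ ε/3 + ε/3 := by
          apply upperMean_le_of_eventually hB (hga.niceDiff g r)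
          filter_upwards [eventually_avg_lt hB (hga.niceDiff g t₁) h1,
            eventually_avg_lt hB (hga.niceDiff t₁ r) h2] with n hn1 hn2
          calc avg μ B n (fun s => ‖f' (s - g) - f' (s - r)‖)
              ≤ avg μ B n (fun s => ‖f' (s - g) - f' (s - t₁)‖ + ‖f' (s - t₁) - f' (s - r)‖) :=
                avg_le_of_le hB (hga.niceDiff g r)
                  ((hga.niceDiff g t₁).add (hga.niceDiff t₁ r))
                  (fun s => norm_triple _ _ _) n
            _ = avg μ B n (fun s => ‖f' (s - g) - f' (s - t₁)‖)
                + avg μ B n (fun s => ‖f' (s - t₁) - f' (s - r)‖) :=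
                avg_add hB (hga.niceDiff g t₁) (hga.niceDiff t₁ r) n
            _ ≤ ε/3 + ε/3 := by linarith
        linarith

lemma jointAP (hB : IsFolner μ B) (L : List (G → ℂ))
    (hL : ∀ f ∈ L, GoodC f ∧ MeanAPFun μ B f) :
    ∀ ε : ℝ, 0 < ε → RelDense {τ : G | ∀ f ∈ L,
      upperMean μ B (fun s => ‖f s - f (s - τ)‖) < ε} := by
  intro ε hε
  obtain ⟨T, hT⟩ := jointTB hB L hL ε hε
  refine ⟨(T : Set G), T.finite_toSet.isCompact, fun g => ?_⟩
  obtain ⟨t, htT, ht⟩ := hT g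
  refine ⟨g - t, ?_, by simpa using htT⟩
  intro f hf
  have hgood := (hL f hf).1
  have key := Mdiff_shift hB hgood g t
  have heq : (fun s => ‖f s - f (s - (g - t))‖)
      = fun s => ‖f (s - (g - t)) - f s‖ := by
    funext s; rw [norm_sub_rev]
  rw [heq, ← key]
  exact ht f hf

end Aux5b

section Aux5c

open Filter MeasureTheory Set
open scoped ENNReal Pointwise

variable {G : Type*} [AddCommGroup G] [TopologicalSpace G] [IsTopologicalAddGroup G] [T2Space G]
    [LocallyCompactSpace G] [SigmaCompactSpace G] [MeasurableSpace G] [BorelSpace G]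
    {μ : Measure G} [μ.IsAddHaarMeasure] {B : ℕ → Set G}
    {X : Type*} [TopologicalSpace X] [CompactSpace X] [T2Space X]
    [AddAction G X] [ContinuousVAdd G X] {d : X → X → ℝ}

lemma avg_list_sum (hB : IsFolner μ B) (n : ℕ) :
    ∀ l : List (G → ℝ), (∀ h ∈ l, NiceR h) →
      avg μ B n (fun s => (l.map fun h => h s).sum) = (l.map fun h => avg μ B n h).sum := by
  intro l
  induction l with
  | nil =>
    intro _
    simp only [List.map_nil, List.sum_nil]
    exact avg_const hB 0 n
  | cons f l ih =>
    intro hl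
    have h1 := hl f (List.mem_cons_self)
    have h2 : ∀ h ∈ l, NiceR h := fun h hh => hl h (List.mem_cons_of_mem f hh)
    simp only [List.map_cons, List.sum_cons]
    rw [avg_add hB h1 (nice_list_sum h2), ih h2]

lemma d_nonneg (hd : IsCompatMetric d) (y z : X) : 0 ≤ d y z := by
  have h := hd.triangle y z y
  rw [hd.refl y, hd.symm z y] at h
  linarith

lemma d_cont (hd : IsCompatMetric d) : Continuous fun p : X × X => d p.1 p.2 := by
  rw [continuous_iff_continuousAt]
  rintro ⟨y, z⟩
  rw [ContinuousAt, nhds_prod_eq, Metric.tendsto_nhds]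
  intro ε hε
  rw [((hd.nhds_basis y).prod (hd.nhds_basis z)).eventually_iff]
  refine ⟨(ε/2, ε/2), ⟨half_pos hε, half_pos hε⟩, ?_⟩
  rintro ⟨y', z'⟩ ⟨hy', hz'⟩
  simp only [Set.mem_setOf_eq] at hy' hz'
  have h1 : d y' z' ≤ d y' y + d y z' := hd.triangle _ _ _
  have h2 : d y z' ≤ d y z + d z z' := hd.triangle _ _ _
  have h3 : d y z ≤ d y y' + d y' z := hd.triangle _ _ _
  have h4 : d y' z ≤ d y' z' + d z' z := hd.triangle _ _ _
  have hs1 : d y' y = d y y' := hd.symm _ _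
  have hs2 : d z' z = d z z' := hd.symm _ _
  rw [Real.dist_eq, abs_sub_lt_iff]
  constructor <;> linarith

lemma d_bdd (hd : IsCompatMetric d) (x₀ : X) : ∃ Cd : ℝ, 0 ≤ Cd ∧ ∀ y z : X, d y z ≤ Cd := by
  have : Nonempty X := ⟨x₀⟩
  obtain ⟨p₀, -, hmax⟩ :=
    isCompact_univ.exists_isMaxOn Set.univ_nonempty ((d_cont hd).continuousOn)
  exact ⟨d p₀.1 p₀.2, d_nonneg hd _ _, fun y z => hmax (Set.mem_univ (y, z))⟩

lemma unif_cont (hd : IsCompatMetric d) {f : X → ℂ} (hf : Continuous f) {ε : ℝ} (hε : 0 < ε) :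
    ∃ δ > 0, ∀ y z : X, d y z < δ → ‖f y - f z‖ ≤ ε := by
  set K := {p : X × X | ε ≤ ‖f p.1 - f p.2‖} with hK_def
  have hKc : IsClosed K :=
    isClosed_le continuous_const ((hf.comp continuous_fst).sub (hf.comp continuous_snd)).norm
  rcases Set.eq_empty_or_nonempty K with hKe | hKne
  · refine ⟨1, one_pos, fun y z _ => ?_⟩
    by_contra hcon
    push_neg at hcon
    exact Set.eq_empty_iff_forall_notMem.1 hKe (y, z) hcon.le
  · obtain ⟨p₀, hp₀K, hmin⟩ := hKc.isCompact.exists_isMinOn hKne ((d_cont hd).continuousOn)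
    refine ⟨d p₀.1 p₀.2, ?_, fun y z hyz => ?_⟩
    · rcases (d_nonneg hd p₀.1 p₀.2).lt_or_eq with h | h
      · exact h
      · exfalso
        have heq : p₀.1 = p₀.2 := hd.eq_of _ _ h.symm
        have hK1 : ε ≤ ‖f p₀.1 - f p₀.2‖ := hp₀K
        rw [heq, sub_self, norm_zero] at hK1
        linarith
    · by_contra hcon
      push_neg at hcon
      have hmem : (y, z) ∈ K := hcon.le
      exact absurd hyz (not_lt.2 (hmin hmem))

lemma niceR_norm_sub (f : C(X, ℂ)) {u v : G → X} (hu : Continuous u) (hv : Continuous v) :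
    NiceR fun s : G => ‖f (u s) - f (v s)‖ := by
  refine ⟨((f.continuous.comp hu).sub (f.continuous.comp hv)).norm, ⟨‖f‖ + ‖f‖, fun s => ?_⟩⟩
  rw [abs_of_nonneg (norm_nonneg _)]
  exact (norm_sub_le _ _).trans (add_le_add (f.norm_coe_le_norm _) (f.norm_coe_le_norm _))

lemma nice_dint (hd : IsCompatMetric d) (x₀ : X) {u v : G → X}
    (hu : Continuous u) (hv : Continuous v) : NiceR fun s : G => d (u s) (v s) := by
  obtain ⟨Cd, hCd0, hCdb⟩ := d_bdd hd x₀
  exact ⟨(d_cont hd).comp (hu.prodMk hv), ⟨Cd, fun s => by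
    rw [abs_of_nonneg (d_nonneg hd _ _)]
    exact hCdb _ _⟩⟩

lemma goodC_along (f : C(X, ℂ)) (x : X) : GoodC fun t : G => f (t +ᵥ x) := by
  refine ⟨f.continuous.comp (continuous_id.vadd continuous_const),
    ⟨‖f‖, fun t => f.norm_coe_le_norm _⟩, ?_⟩
  intro ε hε
  have hcont : Continuous fun p : G × X => ‖f (p.1 +ᵥ p.2) - f p.2‖ :=
    ((f.continuous.comp continuous_vadd).sub (f.continuous.comp continuous_snd)).norm
  have hsub : ({0} : Set G) ×ˢ (Set.univ : Set X)
      ⊆ {p : G × X | ‖f (p.1 +ᵥ p.2) - f p.2‖ < ε} := by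
    rintro ⟨u, y⟩ ⟨hu, -⟩
    rw [Set.mem_singleton_iff] at hu
    subst hu
    show ‖f ((0 : G) +ᵥ y) - f y‖ < ε
    rw [zero_vadd, sub_self, norm_zero]
    exact hε
  obtain ⟨u, v, huo, hvo, h0u, hxv, huv⟩ := generalized_tube_lemma isCompact_singleton
    isCompact_univ (isOpen_lt hcont continuous_const) hsub
  refine ⟨(fun w : G => -w) ⁻¹' u, (huo.preimage continuous_neg).mem_nhds ?_, ?_⟩
  · show -(0 : G) ∈ u
    rw [neg_zero]
    exact h0u (Set.mem_singleton 0)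
  · intro w hw s
    have hmem : ((-w, s +ᵥ x) : G × X) ∈ u ×ˢ v := ⟨hw, hxv (Set.mem_univ _)⟩
    have hlt := huv hmem
    have hz : (s - w) +ᵥ x = -w +ᵥ (s +ᵥ x) := by
      rw [← add_vadd]
      congr 1
      abel
    rw [hz]
    exact hlt.le

lemma apPoint_to_fun (hB : IsFolner μ B) (hd : IsCompatMetric d) (x : X)
    (h : MeanAPPointWith μ B d x) (f : C(X, ℂ)) :
    MeanAPFun μ B fun t : G => f (t +ᵥ x) := by
  intro ε hε
  obtain ⟨δ, hδ, hδf⟩ := unif_cont hd f.continuous (half_pos hε)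
  set cf := 2 * ‖f‖ / δ with hcf_def
  have hcf0 : 0 ≤ cf := by positivity
  set η := ε / (2 * (cf + 1)) with hη_def
  have hη0 : 0 < η := by positivity
  have hkey : (cf + 1) * η = ε / 2 := by
    have hne : cf + 1 ≠ 0 := by positivity
    rw [hη_def]
    field_simp
  have hpt : ∀ y z : X, ‖f y - f z‖ ≤ ε/2 + cf * d y z := by
    intro y z
    rcases lt_or_ge (d y z) δ with hlt | hge
    · have h1 := hδf y z hlt
      have h0 : 0 ≤ cf * d y z := mul_nonneg hcf0 (d_nonneg hd y z)
      linarith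
    · have h1 : ‖f y - f z‖ ≤ 2 * ‖f‖ := by
        have hy := f.norm_coe_le_norm y
        have hz := f.norm_coe_le_norm z
        have := norm_sub_le (f y) (f z)
        linarith
      have h2 : 2 * ‖f‖ = cf * δ := by
        rw [hcf_def]
        field_simp
      have h3 : cf * δ ≤ cf * d y z := mul_le_mul_of_nonneg_left hge hcf0
      linarith [half_pos hε]
  apply RelDense.mono' ?_ (RelDense.neg' (h η hη0))
  intro t ht
  simp only [Set.mem_setOf_eq] at ht ⊢
  have hniceInt : NiceR fun s : G => d (s +ᵥ x) (s +ᵥ (-t +ᵥ x)) :=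
    nice_dint hd x (continuous_id.vadd continuous_const) (continuous_id.vadd continuous_const)
  have hniceD : NiceR fun s : G => ‖f (s +ᵥ x) - f ((s - t) +ᵥ x)‖ :=
    niceR_norm_sub f (continuous_id.vadd continuous_const)
      ((continuous_sub_right t).vadd continuous_const)
  have hz : ∀ s : G, (s - t) +ᵥ x = s +ᵥ (-t +ᵥ x) := by
    intro s
    rw [← add_vadd]
    congr 1
    abel
  have hfinal : upperMean μ B (fun s : G => ‖f (s +ᵥ x) - f ((s - t) +ᵥ x)‖)
      ≤ ε/2 + cf * η := by
    apply upperMean_le_of_eventually hB hniceD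
    filter_upwards [eventually_avg_lt hB hniceInt ht] with n hn
    calc avg μ B n (fun s : G => ‖f (s +ᵥ x) - f ((s - t) +ᵥ x)‖)
        ≤ avg μ B n (fun s : G => ε/2 + cf * d (s +ᵥ x) (s +ᵥ (-t +ᵥ x))) := by
          apply avg_le_of_le hB hniceD ((hniceInt.cmul cf).const_add (ε/2))
          intro s
          rw [hz s]
          exact hpt _ _
      _ = ε/2 + cf * avg μ B n (fun s : G => d (s +ᵥ x) (s +ᵥ (-t +ᵥ x))) := by
          rw [avg_add hB (niceR_const (ε/2)) (hniceInt.cmul cf), avg_const hB, avg_cmul]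
      _ ≤ ε/2 + cf * η := by
          have := mul_le_mul_of_nonneg_left hn.le hcf0
          linarith
  have hlt : ε/2 + cf * η < ε := by nlinarith [hη0, hkey]
  linarith

lemma apPoint_to_dfun (hB : IsFolner μ B) (hd : IsCompatMetric d) (x : X)
    (h : MeanAPPointWith μ B d x) (s : G) :
    MeanAPFun μ B fun t : G => d (s +ᵥ x) (t +ᵥ x) := by
  intro ε hε
  obtain ⟨Cd, hCd0, hCdb⟩ := d_bdd hd x
  apply RelDense.mono' ?_ (RelDense.neg' (h ε hε))
  intro t ht
  simp only [Set.mem_setOf_eq] at ht ⊢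
  have hniceInt : NiceR fun u : G => d (u +ᵥ x) (u +ᵥ (-t +ᵥ x)) :=
    nice_dint hd x (continuous_id.vadd continuous_const) (continuous_id.vadd continuous_const)
  have hnice1 : NiceR fun u : G => ‖d (s +ᵥ x) (u +ᵥ x) - d (s +ᵥ x) ((u - t) +ᵥ x)‖ := by
    refine ⟨?_, ⟨Cd + Cd, fun u => ?_⟩⟩
    · apply Continuous.norm
      apply Continuous.sub
      · exact (d_cont hd).comp (continuous_const.prodMk (continuous_id.vadd continuous_const))
      · exact (d_cont hd).comp
          (continuous_const.prodMk ((continuous_sub_right t).vadd continuous_const))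
    · rw [Real.norm_eq_abs, abs_abs]
      refine (abs_sub _ _).trans ?_
      rw [abs_of_nonneg (d_nonneg hd _ _), abs_of_nonneg (d_nonneg hd _ _)]
      exact add_le_add (hCdb _ _) (hCdb _ _)
  have hptw : ∀ u : G, ‖d (s +ᵥ x) (u +ᵥ x) - d (s +ᵥ x) ((u - t) +ᵥ x)‖
      ≤ d (u +ᵥ x) (u +ᵥ (-t +ᵥ x)) := by
    intro u
    have hzz : (u - t) +ᵥ x = u +ᵥ (-t +ᵥ x) := by
      rw [← add_vadd]
      congr 1
      abel
    rw [← hzz, Real.norm_eq_abs, abs_sub_le_iff]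
    constructor
    · have htr := hd.triangle (s +ᵥ x) ((u - t) +ᵥ x) (u +ᵥ x)
      have hsym := hd.symm ((u - t) +ᵥ x) (u +ᵥ x)
      linarith
    · have htr := hd.triangle (s +ᵥ x) (u +ᵥ x) ((u - t) +ᵥ x)
      linarith
  exact lt_of_le_of_lt (upperMean_mono hB hnice1 hniceInt hptw) ht

lemma fun_to_sep (hd : IsCompatMetric d) (x : X)
    (h : ∀ f : C(X, ℂ), MeanAPFun μ B fun t : G => f (t +ᵥ x)) :
    ∀ y ∈ closure (orbitSet G x), ∀ z ∈ closure (orbitSet G x), y ≠ z →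
      ∃ f : C(X, ℂ), MeanAPFun μ B (fun t : G => f (t +ᵥ x)) ∧ f y ≠ f z := by
  intro y _ z _ hyz
  refine ⟨⟨fun w => (d y w : ℂ),
    Complex.continuous_ofReal.comp ((d_cont hd).comp (Continuous.prodMk_right y))⟩, h _, ?_⟩
  simp only [ContinuousMap.coe_mk]
  rw [hd.refl y]
  intro hc
  apply hyz
  apply hd.eq_of y z
  exact_mod_cast hc.symm

lemma dfun_to_sep (hd : IsCompatMetric d) (x : X)
    (h : ∀ s : G, MeanAPFun μ B fun t : G => d (s +ᵥ x) (t +ᵥ x)) :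
    ∀ y ∈ closure (orbitSet G x), ∀ z ∈ closure (orbitSet G x), y ≠ z →
      ∃ f : C(X, ℂ), MeanAPFun μ B (fun t : G => f (t +ᵥ x)) ∧ f y ≠ f z := by
  intro y hy z _ hyz
  have hdyz : 0 < d y z := by
    rcases (d_nonneg hd y z).lt_or_eq with h0 | h0
    · exact h0
    · exact absurd (hd.eq_of _ _ h0.symm) hyz
  obtain ⟨w, hw, hwlt⟩ := (mem_closure_iff_nhds_basis (hd.nhds_basis y)).1 hy
    (d y z / 2) (by linarith)
  obtain ⟨s, rfl⟩ := hw
  have hwlt' : d y (s +ᵥ x) < d y z / 2 := hwlt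
  refine ⟨⟨fun w' => (d (s +ᵥ x) w' : ℂ),
    Complex.continuous_ofReal.comp ((d_cont hd).comp (Continuous.prodMk_right (s +ᵥ x)))⟩, ?_, ?_⟩
  · intro ε hε
    apply RelDense.mono' ?_ (h s ε hε)
    intro t ht
    simp only [Set.mem_setOf_eq, ContinuousMap.coe_mk] at ht ⊢
    have heq : (fun u : G => ‖((d (s +ᵥ x) (u +ᵥ x) : ℝ) : ℂ)
          - ((d (s +ᵥ x) ((u - t) +ᵥ x) : ℝ) : ℂ)‖)
        = fun u : G => ‖d (s +ᵥ x) (u +ᵥ x) - d (s +ᵥ x) ((u - t) +ᵥ x)‖ := by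
      funext u
      rw [← Complex.ofReal_sub, Complex.norm_real]
    rw [heq]
    exact ht
  · simp only [ContinuousMap.coe_mk]
    have h1 : d (s +ᵥ x) y < d y z / 2 := by
      rw [hd.symm]
      exact hwlt'
    have h2 : d y z / 2 < d (s +ᵥ x) z := by
      have htr := hd.triangle y (s +ᵥ x) z
      linarith
    intro hc
    have hceq : d (s +ᵥ x) y = d (s +ᵥ x) z := by exact_mod_cast hc
    linarith

lemma core (hB : IsFolner μ B) (hd : IsCompatMetric d) (x : X)
    (hsep : ∀ y ∈ closure (orbitSet G x), ∀ z ∈ closure (orbitSet G x), y ≠ z →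
      ∃ f : C(X, ℂ), MeanAPFun μ B (fun t : G => f (t +ᵥ x)) ∧ f y ≠ f z) :
    MeanAPPointWith μ B d x := by
  classical
  intro ε hε
  obtain ⟨Cd, hCd0, hCdb⟩ := d_bdd hd x
  obtain ⟨L, hLap, δ, hδ, hLsep⟩ :
      ∃ L : List C(X, ℂ), (∀ f ∈ L, MeanAPFun μ B fun t : G => f (t +ᵥ x)) ∧
        ∃ δ > 0, ∀ y ∈ closure (orbitSet G x), ∀ z ∈ closure (orbitSet G x),
          (∀ f ∈ L, ‖f y - f z‖ ≤ δ) → d y z < ε/2 := by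
    set S : Set (X × X) := ({p | p.1 ∈ closure (orbitSet G x)}
      ∩ {p | p.2 ∈ closure (orbitSet G x)}) ∩ {p | ε/2 ≤ d p.1 p.2} with hS_def
    rcases Set.eq_empty_or_nonempty S with hSe | hSne
    · refine ⟨[], by simp, 1, one_pos, fun y hy z hz _ => ?_⟩
      by_contra hcon
      push_neg at hcon
      exact Set.eq_empty_iff_forall_notMem.1 hSe (y, z) ⟨⟨hy, hz⟩, hcon⟩
    · have hScl : IsClosed S :=
        ((isClosed_closure.preimage continuous_fst).inter
          (isClosed_closure.preimage continuous_snd)).inter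
          (isClosed_le continuous_const (d_cont hd))
      have hScmp : IsCompact S := hScl.isCompact
      have hchoice : ∀ p : X × X, p ∈ S → ∃ f : C(X, ℂ),
          MeanAPFun μ B (fun t : G => f (t +ᵥ x)) ∧ 0 < ‖f p.1 - f p.2‖ := by
        intro p hp
        have hne : p.1 ≠ p.2 := by
          intro hcontra
          have h1 : ε/2 ≤ d p.1 p.2 := hp.2
          rw [hcontra, hd.refl] at h1
          linarith
        obtain ⟨f, hf1, hf2⟩ := hsep p.1 hp.1.1 p.2 hp.1.2 hne
        exact ⟨f, hf1, norm_pos_iff.2 (sub_ne_zero.2 hf2)⟩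
      choose! F hF1 hF2 using hchoice
      have hopen : ∀ p ∈ S,
          IsOpen {q : X × X | ‖F p p.1 - F p p.2‖/2 < ‖F p q.1 - F p q.2‖} :=
        fun p _ => isOpen_lt continuous_const
          (((F p).continuous.comp continuous_fst).sub
            ((F p).continuous.comp continuous_snd)).norm
      have hcover : S ⊆ ⋃ p ∈ S,
          {q : X × X | ‖F p p.1 - F p p.2‖/2 < ‖F p q.1 - F p q.2‖} :=
        fun p hp => Set.mem_biUnion hp (half_lt_self (hF2 p hp))
      obtain ⟨P, hPsub, hPfin, hPcov⟩ := hScmp.elim_finite_subcover_image hopen hcover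
      have hPne : P.Nonempty := by
        obtain ⟨p₀, hp₀⟩ := hSne
        obtain ⟨q, hq, -⟩ := Set.mem_iUnion₂.1 (hPcov hp₀)
        exact ⟨q, hq⟩
      have hPfne : hPfin.toFinset.Nonempty := by
        obtain ⟨q, hq⟩ := hPne
        exact ⟨q, hPfin.mem_toFinset.2 hq⟩
      set δ := (hPfin.toFinset.image fun p => ‖F p p.1 - F p p.2‖/2).min'
        (hPfne.image _) with hδ_def
      have hδpos : 0 < δ := by
        have hmem := Finset.min'_mem
          (hPfin.toFinset.image fun p => ‖F p p.1 - F p p.2‖/2) (hPfne.image _)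
        obtain ⟨p, hpPf, hpv⟩ := Finset.mem_image.1 hmem
        rw [hδ_def, ← hpv]
        exact half_pos (hF2 p (hPsub (hPfin.mem_toFinset.1 hpPf)))
      refine ⟨hPfin.toFinset.toList.map F, ?_, δ, hδpos, ?_⟩
      · intro f hf
        obtain ⟨p, hp, rfl⟩ := List.mem_map.1 hf
        exact hF1 p (hPsub (hPfin.mem_toFinset.1 (Finset.mem_toList.1 hp)))
      · intro y hy z hz hfb
        by_contra hcon
        push_neg at hcon
        have hyzS : (y, z) ∈ S := ⟨⟨hy, hz⟩, hcon⟩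
        obtain ⟨p, hpP, hpq⟩ := Set.mem_iUnion₂.1 (hPcov hyzS)
        have hFmem : F p ∈ hPfin.toFinset.toList.map F :=
          List.mem_map.2 ⟨p, Finset.mem_toList.2 (hPfin.mem_toFinset.2 hpP), rfl⟩
        have hle : ‖F p y - F p z‖ ≤ δ := hfb (F p) hFmem
        have hmin : δ ≤ ‖F p p.1 - F p p.2‖/2 :=
          Finset.min'_le _ _ (Finset.mem_image_of_mem _ (hPfin.mem_toFinset.2 hpP))
        have hpq' : ‖F p p.1 - F p p.2‖/2 < ‖F p y - F p z‖ := hpq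
        linarith
  set c := Cd / δ with hc_def
  have hc0 : 0 ≤ c := div_nonneg hCd0 hδ.le
  set N := L.length with hN_def
  set η := ε / (2 * (c * N + 1)) with hη_def
  have hη0 : 0 < η := by positivity
  have hkey : (c * N + 1) * η = ε / 2 := by
    have hne : c * (N : ℝ) + 1 ≠ 0 := by positivity
    rw [hη_def]
    field_simp
  set L' : List (G → ℂ) := L.map (fun f : C(X, ℂ) => fun t : G => f (t +ᵥ x)) with hL'_def
  have hL'good : ∀ f' ∈ L', GoodC f' ∧ MeanAPFun μ B f' := by
    intro f' hf'
    obtain ⟨f, hfL, rfl⟩ := List.mem_map.1 hf'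
    exact ⟨goodC_along f x, hLap f hfL⟩
  have hRD := jointAP hB L' hL'good η hη0
  apply RelDense.mono' ?_ (RelDense.neg' hRD)
  intro t ht
  simp only [Set.mem_setOf_eq] at ht ⊢
  have hap' : ∀ f ∈ L,
      upperMean μ B (fun s : G => ‖f (s +ᵥ x) - f (s +ᵥ (t +ᵥ x))‖) < η := by
    intro f hfL
    have hmem : (fun u : G => f (u +ᵥ x)) ∈ L' := List.mem_map.2 ⟨f, hfL, rfl⟩
    have hthis := ht _ hmem
    have heq2 : (fun s : G => ‖f (s +ᵥ x) - f (s +ᵥ (t +ᵥ x))‖)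
        = fun s : G => ‖(fun u : G => f (u +ᵥ x)) s - (fun u : G => f (u +ᵥ x)) (s - -t)‖ := by
      funext s
      show ‖f (s +ᵥ x) - f (s +ᵥ (t +ᵥ x))‖ = ‖f (s +ᵥ x) - f ((s - -t) +ᵥ x)‖
      rw [sub_neg_eq_add, add_vadd]
    rw [heq2]
    exact hthis
  have hptw : ∀ s : G, d (s +ᵥ x) (s +ᵥ (t +ᵥ x))
      ≤ ε/2 + (L.map fun f : C(X, ℂ) => c * ‖f (s +ᵥ x) - f (s +ᵥ (t +ᵥ x))‖).sum := by
    intro s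
    have hyY : (s +ᵥ x) ∈ closure (orbitSet G x) := subset_closure ⟨s, rfl⟩
    have hzY : (s +ᵥ (t +ᵥ x)) ∈ closure (orbitSet G x) :=
      subset_closure ⟨s + t, add_vadd s t x⟩
    have hsum0 : (0:ℝ)
        ≤ (L.map fun f : C(X, ℂ) => c * ‖f (s +ᵥ x) - f (s +ᵥ (t +ᵥ x))‖).sum :=
      List.sum_nonneg fun r hr => by
        obtain ⟨f, -, rfl⟩ := List.mem_map.1 hr
        exact mul_nonneg hc0 (norm_nonneg _)
    by_cases hcase : ∀ f ∈ L, ‖f (s +ᵥ x) - f (s +ᵥ (t +ᵥ x))‖ ≤ δ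
    · have := hLsep _ hyY _ hzY hcase
      linarith
    · push_neg at hcase
      obtain ⟨f₀, hf₀L, hf₀⟩ := hcase
      have h1 : d (s +ᵥ x) (s +ᵥ (t +ᵥ x)) ≤ Cd := hCdb _ _
      have h2 : Cd = c * δ := by
        rw [hc_def]
        field_simp
      have h3 : c * δ ≤ c * ‖f₀ (s +ᵥ x) - f₀ (s +ᵥ (t +ᵥ x))‖ :=
        mul_le_mul_of_nonneg_left hf₀.le hc0
      have h4 : c * ‖f₀ (s +ᵥ x) - f₀ (s +ᵥ (t +ᵥ x))‖
          ≤ (L.map fun f : C(X, ℂ) => c * ‖f (s +ᵥ x) - f (s +ᵥ (t +ᵥ x))‖).sum :=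
        List.single_le_sum (fun r hr => by
          obtain ⟨f, -, rfl⟩ := List.mem_map.1 hr
          exact mul_nonneg hc0 (norm_nonneg _)) _
          (List.mem_map.2 ⟨f₀, hf₀L, rfl⟩)
      linarith
  have hniceInt : NiceR fun s : G => d (s +ᵥ x) (s +ᵥ (t +ᵥ x)) :=
    nice_dint hd x (continuous_id.vadd continuous_const) (continuous_id.vadd continuous_const)
  set gl : List (G → ℝ) := L.map
    (fun f : C(X, ℂ) => fun s : G => c * ‖f (s +ᵥ x) - f (s +ᵥ (t +ᵥ x))‖) with hgl_def
  have hgl_eval : ∀ s : G, (gl.map fun h' => h' s).sum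
      = (L.map fun f : C(X, ℂ) => c * ‖f (s +ᵥ x) - f (s +ᵥ (t +ᵥ x))‖).sum := by
    intro s
    rw [hgl_def, List.map_map]
    rfl
  have hglnice : ∀ h' ∈ gl, NiceR h' := by
    intro h' hh'
    obtain ⟨f, hfL, rfl⟩ := List.mem_map.1 hh'
    exact (niceR_norm_sub f (continuous_id.vadd continuous_const)
      (continuous_id.vadd continuous_const)).cmul c
  have hnicesum : NiceR fun s : G => (gl.map fun h' => h' s).sum := nice_list_sum hglnice
  have hev : ∀ᶠ n in atTop, ∀ h' ∈ gl, avg μ B n h' ≤ c * η := by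
    apply eventually_list
    intro hfun hh'
    obtain ⟨f, hfL, rfl⟩ := List.mem_map.1 hh'
    have hfnice : NiceR fun s : G => ‖f (s +ᵥ x) - f (s +ᵥ (t +ᵥ x))‖ :=
      niceR_norm_sub f (continuous_id.vadd continuous_const)
        (continuous_id.vadd continuous_const)
    filter_upwards [eventually_avg_lt hB hfnice (hap' f hfL)] with n hn
    calc avg μ B n (fun s : G => c * ‖f (s +ᵥ x) - f (s +ᵥ (t +ᵥ x))‖)
        = c * avg μ B n (fun s : G => ‖f (s +ᵥ x) - f (s +ᵥ (t +ᵥ x))‖) := avg_cmul c _ n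
      _ ≤ c * η := mul_le_mul_of_nonneg_left hn.le hc0
  have hfinal : upperMean μ B (fun s : G => d (s +ᵥ x) (s +ᵥ (t +ᵥ x)))
      ≤ ε/2 + N * (c * η) := by
    apply upperMean_le_of_eventually hB hniceInt
    filter_upwards [hev] with n hn
    calc avg μ B n (fun s : G => d (s +ᵥ x) (s +ᵥ (t +ᵥ x)))
        ≤ avg μ B n (fun s : G => ε/2 + (gl.map fun h' => h' s).sum) := by
          apply avg_le_of_le hB hniceInt (hnicesum.const_add (ε/2))
          intro s
          rw [hgl_eval s]
          exact hptw s
      _ = ε/2 + avg μ B n (fun s : G => (gl.map fun h' => h' s).sum) := by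
          rw [avg_add hB (niceR_const (ε/2)) hnicesum, avg_const hB]
      _ = ε/2 + (gl.map fun h' => avg μ B n h').sum := by
          rw [avg_list_sum hB n gl hglnice]
      _ ≤ ε/2 + N * (c * η) := by
          have hsum := List.sum_le_card_nsmul (gl.map fun h' => avg μ B n h') (c * η)
            (fun r hr => by
              obtain ⟨h', hh', rfl⟩ := List.mem_map.1 hr
              exact hn h' hh')
          have hlen : (gl.map fun h' => avg μ B n h').length = N := by
            rw [List.length_map, hgl_def, List.length_map, hN_def]
          rw [hlen, nsmul_eq_mul] at hsum
          linarith
  have hNc : (N : ℝ) * (c * η) = ε/2 - η := by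
    have h5 : (N : ℝ) * (c * η) = (c * N) * η := by ring
    linarith [hkey]
  linarith [hη0, hfinal]

end Aux5c

/-- Mean almost periodicity of a point via functions. -/
theorem statement_5
    {G : Type*} [AddCommGroup G] [TopologicalSpace G] [IsTopologicalAddGroup G] [T2Space G]
    [LocallyCompactSpace G] [SigmaCompactSpace G] [MeasurableSpace G] [BorelSpace G]
    (μ : Measure G) [μ.IsAddHaarMeasure] (B : ℕ → Set G) (hB : IsFolner μ B)
    {X : Type*} [TopologicalSpace X] [CompactSpace X] [T2Space X]
    [AddAction G X] [ContinuousVAdd G X]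
    (d : X → X → ℝ) (hd : IsCompatMetric d) (x : X) :
    (MeanAPPointWith μ B d x ↔ ∀ f : C(X, ℂ), MeanAPFun μ B fun t : G => f (t +ᵥ x)) ∧
    (MeanAPPointWith μ B d x ↔
      ∀ y ∈ closure (orbitSet G x), ∀ z ∈ closure (orbitSet G x), y ≠ z →
        ∃ f : C(X, ℂ), MeanAPFun μ B (fun t : G => f (t +ᵥ x)) ∧ f y ≠ f z) ∧
    (MeanAPPointWith μ B d x ↔ ∀ s : G, MeanAPFun μ B fun t : G => d (s +ᵥ x) (t +ᵥ x)) := by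
  have h12 : MeanAPPointWith μ B d x →
      ∀ f : C(X, ℂ), MeanAPFun μ B fun t : G => f (t +ᵥ x) :=
    fun h f => apPoint_to_fun hB hd x h f
  have h23 : (∀ f : C(X, ℂ), MeanAPFun μ B fun t : G => f (t +ᵥ x)) →
      ∀ y ∈ closure (orbitSet G x), ∀ z ∈ closure (orbitSet G x), y ≠ z →
        ∃ f : C(X, ℂ), MeanAPFun μ B (fun t : G => f (t +ᵥ x)) ∧ f y ≠ f z :=
    fun h => fun_to_sep hd x h
  have h31 := core hB hd x
  have h14 : MeanAPPointWith μ B d x →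
      ∀ s : G, MeanAPFun μ B fun t : G => d (s +ᵥ x) (t +ᵥ x) :=
    fun h s => apPoint_to_dfun hB hd x h s
  have h43 := dfun_to_sep (μ := μ) (B := B) hd x
  exact ⟨⟨h12, fun h => h31 (h23 h)⟩,
    ⟨fun h => h23 (h12 h), h31⟩, ⟨h14, fun h => h31 (h43 h)⟩⟩

end APPaper
end
end

section
/- Let (X,G) be a dynamical system over a σ-compact locally compact abelian group G, d a metric on X generating its topology, and (B_n) a Følner sequence in G. For x ∈ X the following are equivalent: (i) x is mean almost periodic; (ii) for every δ>0 and every ε>0 the set of t ∈ G with Dens({s ∈ G : d(sx, t(sx)) ≥ δ}) < ε is relatively dense in G, where Dens(A) := M̄(1_A) is the upper density of A ⊆ G. -/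
open MeasureTheory Filter Topology Set Pointwise

noncomputable section

namespace APPaper

private lemma limsup_affine (c k : ℝ) (a : ℕ → ℝ) (M : ℝ)
    (h0 : ∀ n, 0 ≤ a n) (hM : ∀ n, a n ≤ M) (hk : 0 ≤ k) :
    Filter.limsup (fun n => c + k * a n) Filter.atTop
      = c + k * Filter.limsup a Filter.atTop := by
  have hmono : Monotone fun y : ℝ => c + k * y := fun u v huv => by
    simp only
    nlinarith [mul_le_mul_of_nonneg_left huv hk]
  have h := hmono.map_limsup_of_continuousAt (F := Filter.atTop) a
    ((continuous_const.add (continuous_const.mul continuous_id)).continuousAt)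
    (Filter.isBoundedUnder_of ⟨M, hM⟩)
    (Filter.isCoboundedUnder_le_of_le _ h0)
  exact h.symm

/-- Mean almost periodicity of a point via density of superlevel sets. -/
theorem statement_6
    {G : Type*} [AddCommGroup G] [TopologicalSpace G] [IsTopologicalAddGroup G] [T2Space G]
    [LocallyCompactSpace G] [SigmaCompactSpace G] [MeasurableSpace G] [BorelSpace G]
    (μ : Measure G) [μ.IsAddHaarMeasure] (B : ℕ → Set G) (hB : IsFolner μ B)
    {X : Type*} [TopologicalSpace X] [CompactSpace X] [T2Space X]
    [AddAction G X] [ContinuousVAdd G X]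
    (d : X → X → ℝ) (hd : IsCompatMetric d) (x : X) :
    MeanAPPointWith μ B d x ↔
      ∀ δ : ℝ, 0 < δ → ∀ ε : ℝ, 0 < ε →
        RelDense {t : G | upperDens μ B {s : G | δ ≤ d (s +ᵥ x) (t +ᵥ (s +ᵥ x))} < ε} := by
  classical
  have hcomm : ∀ t s : G, t +ᵥ (s +ᵥ x) = s +ᵥ (t +ᵥ x) := fun t s => by
    rw [vadd_vadd, vadd_vadd, add_comm]
  have hd0 : ∀ y z : X, 0 ≤ d y z := fun y z => by
    have h1 := hd.triangle y z y
    have h2 := hd.symm y z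
    have h3 := hd.refl y
    linarith
  have hdc : Continuous fun p : X × X => d p.1 p.2 := by
    rw [continuous_iff_continuousAt]
    rintro ⟨y₀, z₀⟩
    rw [ContinuousAt, Metric.tendsto_nhds]
    intro ε hε
    have hy : {y | d y₀ y < ε / 2} ∈ 𝓝 y₀ :=
      (hd.nhds_basis y₀).mem_of_mem (by linarith)
    have hz : {z | d z₀ z < ε / 2} ∈ 𝓝 z₀ :=
      (hd.nhds_basis z₀).mem_of_mem (by linarith)
    rw [nhds_prod_eq]
    filter_upwards [Filter.prod_mem_prod hy hz] with p hp
    obtain ⟨h1, h2⟩ := hp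
    simp only [Set.mem_setOf_eq] at h1 h2
    rw [Real.dist_eq, abs_sub_lt_iff]
    constructor
    · linarith [hd.triangle p.1 y₀ p.2, hd.triangle y₀ z₀ p.2, hd.symm y₀ p.1]
    · linarith [hd.triangle y₀ p.1 z₀, hd.triangle p.1 p.2 z₀, hd.symm p.2 z₀]
  obtain ⟨p₀, -, hp₀⟩ := isCompact_univ.exists_isMaxOn (s := (Set.univ : Set (X × X)))
    ⟨(x, x), trivial⟩ hdc.continuousOn
  set C : ℝ := d p₀.1 p₀.2 with hCdef
  have hC : ∀ y z : X, d y z ≤ C := fun y z => hp₀ (Set.mem_univ (y, z))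
  have hC0 : 0 ≤ C := hd0 _ _
  set g : G → G → ℝ := fun t s => d (s +ᵥ x) (s +ᵥ (t +ᵥ x)) with hgdef
  have hgc : ∀ t, Continuous (g t) := fun t =>
    hdc.comp ((continuous_id.vadd continuous_const).prodMk
      (continuous_id.vadd continuous_const))
  have hg0 : ∀ t s, 0 ≤ g t s := fun t s => hd0 _ _
  have hgC : ∀ t s, g t s ≤ C := fun t s => hC _ _
  have hμfin : ∀ n, μ (B n) < ⊤ := fun n =>
    lt_of_le_of_lt (measure_mono subset_closure) (hB.relCompact n).measure_lt_top
  have hμpos : ∀ n, 0 < (μ (B n)).toReal := fun n =>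
    ENNReal.toReal_pos ((hB.isOpen n).measure_pos μ (hB.nonempty n)).ne' (hμfin n).ne
  -- basic avg lemmas
  have avg_mono : ∀ n (h1 h2 : G → ℝ), IntegrableOn h1 (B n) μ → IntegrableOn h2 (B n) μ →
      (∀ s, h1 s ≤ h2 s) → avg μ B n h1 ≤ avg μ B n h2 := fun n h1 h2 i1 i2 hle =>
    mul_le_mul_of_nonneg_left (setIntegral_mono i1 i2 hle) (by positivity)
  have avg_const : ∀ n (c : ℝ), avg μ B n (fun _ => c) = c := fun n c => by
    rw [avg, setIntegral_const, smul_eq_mul, measureReal_def, ← mul_assoc,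
      inv_mul_cancel₀ (hμpos n).ne', one_mul]
  have avg_nonneg : ∀ n (h : G → ℝ), (∀ s, 0 ≤ h s) → 0 ≤ avg μ B n h := fun n h h0 =>
    mul_nonneg (by positivity)
      (setIntegral_nonneg (hB.isOpen n).measurableSet fun s _ => h0 s)
  have hgint : ∀ t n, IntegrableOn (g t) (B n) μ := fun t n =>
    ((hgc t).continuousOn.integrableOn_compact (hB.relCompact n)).mono_set subset_closure
  have avg_le : ∀ n (h : G → ℝ) (M : ℝ), IntegrableOn h (B n) μ → (∀ s, h s ≤ M) →
      avg μ B n h ≤ M := fun n h M hi hM => by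
    have := avg_mono n h (fun _ => M) hi (integrableOn_const (hμfin n).ne) hM
    rwa [avg_const] at this
  constructor
  · intro hx δ hδ ε hε
    obtain ⟨K, hK, hKcov⟩ := hx (δ * ε) (by positivity)
    refine ⟨K, hK, fun g0 => ?_⟩
    obtain ⟨t, ht, hgt⟩ := hKcov g0
    refine ⟨t, ?_, hgt⟩
    simp only [Set.mem_setOf_eq] at ht ⊢
    have hEq : {s : G | δ ≤ d (s +ᵥ x) (t +ᵥ (s +ᵥ x))} = {s : G | δ ≤ g t s} := by
      ext s
      rw [Set.mem_setOf_eq, Set.mem_setOf_eq, hcomm]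
    rw [hEq]
    set E : Set G := {s : G | δ ≤ g t s} with hEdef
    have hEmeas : MeasurableSet E := (isClosed_le continuous_const (hgc t)).measurableSet
    set ind : G → ℝ := E.indicator fun _ => (1 : ℝ) with hinddef
    have hind01 : ∀ s, 0 ≤ ind s ∧ ind s ≤ 1 := fun s => by
      by_cases hs : s ∈ E <;>
        simp [hinddef, Set.indicator_of_mem, Set.indicator_of_notMem, hs]
    have hindint : ∀ n, IntegrableOn ind (B n) μ := fun n =>
      (integrableOn_const (hμfin n).ne).indicator hEmeas
    have hle : ∀ n, δ * avg μ B n ind ≤ avg μ B n (g t) := by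
      intro n
      have heq : δ * avg μ B n ind = avg μ B n fun s => δ * ind s := by
        rw [avg, avg, integral_const_mul]; ring
      rw [heq]
      refine avg_mono n _ _ ((hindint n).const_mul δ) (hgint t n) fun s => ?_
      by_cases hs : s ∈ E
      · rw [hinddef, Set.indicator_of_mem hs, mul_one]
        exact hs
      · rw [hinddef, Set.indicator_of_notMem hs, mul_zero]
        exact hg0 t s
    have ha0 : ∀ n, 0 ≤ avg μ B n ind := fun n => avg_nonneg n ind fun s => (hind01 s).1
    have ha1 : ∀ n, avg μ B n ind ≤ 1 := fun n =>
      avg_le n ind 1 (hindint n) fun s => (hind01 s).2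
    have hkey : δ * upperDens μ B E ≤ upperMean μ B (g t) := by
      have heq : δ * upperDens μ B E
          = Filter.limsup (fun n => 0 + δ * avg μ B n ind) Filter.atTop := by
        rw [limsup_affine 0 δ _ 1 ha0 ha1 hδ.le, zero_add]; rfl
      rw [heq, upperMean]
      refine Filter.limsup_le_limsup (Filter.Eventually.of_forall fun n => by
          simpa using hle n) ?_ ?_
      · exact Filter.isCoboundedUnder_le_of_le _ fun n => by
          simpa using mul_nonneg hδ.le (ha0 n)
      · exact Filter.isBoundedUnder_of ⟨C, fun n =>
          avg_le n (g t) C (hgint t n) (hgC t)⟩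
    have : δ * upperDens μ B E < δ * ε := lt_of_le_of_lt hkey ht
    exact lt_of_mul_lt_mul_left this hδ.le
  · intro hx ε hε
    have hε' : 0 < ε / (2 * (C + 1)) := by positivity
    obtain ⟨K, hK, hKcov⟩ := hx (ε / 2) (by positivity) (ε / (2 * (C + 1))) hε'
    refine ⟨K, hK, fun g0 => ?_⟩
    obtain ⟨t, ht, hgt⟩ := hKcov g0
    refine ⟨t, ?_, hgt⟩
    simp only [Set.mem_setOf_eq] at ht ⊢
    have hEq : {s : G | ε / 2 ≤ d (s +ᵥ x) (t +ᵥ (s +ᵥ x))} = {s : G | ε / 2 ≤ g t s} := by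
      ext s
      rw [Set.mem_setOf_eq, Set.mem_setOf_eq, hcomm]
    rw [hEq] at ht
    set E : Set G := {s : G | ε / 2 ≤ g t s} with hEdef
    have hEmeas : MeasurableSet E := (isClosed_le continuous_const (hgc t)).measurableSet
    set ind : G → ℝ := E.indicator fun _ => (1 : ℝ) with hinddef
    have hind01 : ∀ s, 0 ≤ ind s ∧ ind s ≤ 1 := fun s => by
      by_cases hs : s ∈ E <;>
        simp [hinddef, Set.indicator_of_mem, Set.indicator_of_notMem, hs]
    have hindint : ∀ n, IntegrableOn ind (B n) μ := fun n =>
      (integrableOn_const (hμfin n).ne).indicator hEmeas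
    have ha0 : ∀ n, 0 ≤ avg μ B n ind := fun n => avg_nonneg n ind fun s => (hind01 s).1
    have ha1 : ∀ n, avg μ B n ind ≤ 1 := fun n =>
      avg_le n ind 1 (hindint n) fun s => (hind01 s).2
    have hle : ∀ n, avg μ B n (g t) ≤ ε / 2 + C * avg μ B n ind := by
      intro n
      have heq : ε / 2 + C * avg μ B n ind
          = avg μ B n fun s => ε / 2 + C * ind s := by
        simp only [avg]
        rw [integral_add (integrableOn_const (C := ε / 2) (hμfin n).ne)
          ((hindint n).const_mul C), setIntegral_const, integral_const_mul, smul_eq_mul, measureReal_def]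
        field_simp [(hμpos n).ne']
      rw [heq]
      refine avg_mono n _ _ (hgint t n)
        ((integrableOn_const (hμfin n).ne).add ((hindint n).const_mul C))
        fun s => ?_
      by_cases hs : s ∈ E
      · rw [hinddef, Set.indicator_of_mem hs, mul_one]
        have := hgC t s
        linarith
      · have hlt : ¬ (ε / 2 ≤ g t s) := hs
        rw [hinddef, Set.indicator_of_notMem hs, mul_zero, add_zero]
        linarith
    have hkey : upperMean μ B (g t) ≤ ε / 2 + C * upperDens μ B E := by
      have heq : ε / 2 + C * upperDens μ B E
          = Filter.limsup (fun n => ε / 2 + C * avg μ B n ind) Filter.atTop :=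
        (limsup_affine (ε / 2) C _ 1 ha0 ha1 hC0).symm
      rw [heq, upperMean]
      refine Filter.limsup_le_limsup (Filter.Eventually.of_forall hle) ?_ ?_
      · exact Filter.isCoboundedUnder_le_of_le _ fun n =>
          avg_nonneg n (g t) (hg0 t)
      · exact Filter.isBoundedUnder_of ⟨ε / 2 + C * 1, fun n => by
          have := ha1 n; nlinarith⟩
    have hd1 : C * upperDens μ B E ≤ C * (ε / (2 * (C + 1))) :=
      mul_le_mul_of_nonneg_left ht.le hC0
    have : upperMean μ B (g t) ≤ ε / 2 + C * (ε / (2 * (C + 1))) := by linarith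
    have hlt : ε / 2 + C * (ε / (2 * (C + 1))) < ε := by
      have hC1 : (0 : ℝ) < C + 1 := by linarith
      have hfrac : C / (C + 1) < 1 := (div_lt_one hC1).mpr (by linarith)
      have h1 : C * (ε / (2 * (C + 1))) = C / (C + 1) * (ε / 2) := by
        rw [div_mul_div_comm, mul_comm (C + 1) 2, ← mul_div_assoc]
      have h2 : C / (C + 1) * (ε / 2) < 1 * (ε / 2) :=
        mul_lt_mul_of_pos_right hfrac (by linarith)
      linarith
    linarith

end APPaper
end
end

section
/- Let (X,G) be a dynamical system over a σ-compact locally compact abelian group G and (B_n) a Følner sequence in G. If x ∈ X is Weyl almost periodic, then every point of the orbit closure of x is Weyl almost periodic. -/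
open MeasureTheory Filter Topology Set Pointwise

noncomputable section

namespace APPaper

section Aux

variable {G : Type*} [AddCommGroup G] [TopologicalSpace G] [IsTopologicalAddGroup G] [T2Space G]
    [LocallyCompactSpace G] [SigmaCompactSpace G] [MeasurableSpace G] [BorelSpace G]
    (μ : Measure G) [μ.IsAddHaarMeasure] (B : ℕ → Set G)

/-- In a compact metric space, distances are bounded by the diameter of the space. -/
lemma dist_le_diam_univ {X : Type*} [MetricSpace X] [CompactSpace X] (a b : X) :
    dist a b ≤ Metric.diam (Set.univ : Set X) :=
  Metric.dist_le_diam_of_mem isCompact_univ.isBounded (Set.mem_univ a) (Set.mem_univ b)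

/-- Each normalized average over a translate `u +ᵥ B n` of a function bounded by `C`
is at most `C`. -/
lemma avg_translate_le (n : ℕ) (hfin : μ (B n) ≠ ⊤) {h : G → ℝ} {C : ℝ} (hC0 : 0 ≤ C)
    (hCb : ∀ s, ‖h s‖ ≤ C) (hm : AEStronglyMeasurable h μ) (u : G) :
    (μ (B n)).toReal⁻¹ * ∫ s in u +ᵥ B n, h s ∂μ ≤ C := by
  have hμu : μ (u +ᵥ B n) = μ (B n) := measure_vadd μ u (B n)
  have hfin' : μ (u +ᵥ B n) < ⊤ := hμu ▸ lt_top_iff_ne_top.2 hfin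
  have hint : ‖∫ s in u +ᵥ B n, h s ∂μ‖ ≤ C * (μ (u +ᵥ B n)).toReal :=
    norm_setIntegral_le_of_norm_le_const hfin' (fun s _ => hCb s)
  have h1 : ∫ s in u +ᵥ B n, h s ∂μ ≤ C * (μ (B n)).toReal := by
    calc ∫ s in u +ᵥ B n, h s ∂μ ≤ ‖∫ s in u +ᵥ B n, h s ∂μ‖ := le_abs_self _
    _ ≤ C * (μ (u +ᵥ B n)).toReal := hint
    _ = C * (μ (B n)).toReal := by rw [hμu]
  set V := (μ (B n)).toReal with hV
  have hV0 : 0 ≤ V := ENNReal.toReal_nonneg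
  calc V⁻¹ * ∫ s in u +ᵥ B n, h s ∂μ ≤ V⁻¹ * (C * V) := by
        exact mul_le_mul_of_nonneg_left h1 (inv_nonneg.2 hV0)
  _ = C * (V⁻¹ * V) := by ring
  _ ≤ C * 1 := by
        refine mul_le_mul_of_nonneg_left ?_ hC0
        rcases eq_or_ne V 0 with h0 | h0
        · simp [h0]
        · rw [inv_mul_cancel₀ h0]
  _ = C := mul_one C

/-- The family of averages over translates is bounded above. -/
lemma bddAbove_avg_translate (n : ℕ) (hfin : μ (B n) ≠ ⊤) {h : G → ℝ} {C : ℝ} (hC0 : 0 ≤ C)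
    (hCb : ∀ s, ‖h s‖ ≤ C) (hm : AEStronglyMeasurable h μ) :
    BddAbove (Set.range fun u : G => (μ (B n)).toReal⁻¹ * ∫ s in u +ᵥ B n, h s ∂μ) := by
  refine ⟨C, ?_⟩
  rintro _ ⟨u, rfl⟩
  exact avg_translate_le μ B n hfin hC0 hCb hm u

/-- Change of variables: the average of `h (· + r)` over `u +ᵥ B n` is the average of `h`
over `(u + r) +ᵥ B n`. -/
lemma setIntegral_add_right (n : ℕ) (h : G → ℝ) (r u : G) :
    ∫ s in u +ᵥ B n, h (s + r) ∂μ = ∫ s in (u + r) +ᵥ B n, h s ∂μ := by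
  have hemb : MeasurableEmbedding (fun s : G => s + r) :=
    (MeasurableEquiv.addRight r).measurableEmbedding
  have hmp : MeasurePreserving (fun s : G => s + r) μ μ := measurePreserving_add_right μ r
  have hpre : (fun s : G => s + r) ⁻¹' ((u + r) +ᵥ B n) = u +ᵥ B n := by
    ext s
    simp only [Set.mem_preimage, Set.mem_vadd_set_iff_neg_vadd_mem, vadd_eq_add]
    have h1 : -(u + r) + (s + r) = -u + s := by abel
    rw [h1]
  rw [← hpre]
  exact hmp.setIntegral_preimage_emb hemb h _

/-- The key monotonicity lemma: `weylDist` between a point of the orbit closure and its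
translate is dominated by the corresponding quantity for `x`. -/
lemma weylDist_orbitClosure_le
    {X : Type*} [MetricSpace X] [CompactSpace X] [AddAction G X] [ContinuousVAdd G X]
    (hB : IsFolner μ B) (x y : X) (hy : y ∈ closure (orbitSet G x)) (N : ℕ) (t : G) :
    weylDist μ B N y (t +ᵥ y) ≤ weylDist μ B N x (t +ᵥ x) := by
  classical
  set C := Metric.diam (Set.univ : Set X) with hC
  have hC0 : 0 ≤ C := Metric.diam_nonneg
  have hCb : ∀ (z w : X) (s : G), ‖dist (s +ᵥ z) (s +ᵥ w)‖ ≤ C := fun z w s => by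
    rw [Real.norm_eq_abs, abs_of_nonneg dist_nonneg]; exact dist_le_diam_univ _ _
  have hfin : μ (B N) ≠ ⊤ :=
    (lt_of_le_of_lt (measure_mono subset_closure) (hB.relCompact N).measure_lt_top).ne
  -- continuity of the integrands
  have hcont : ∀ z w : X, Continuous fun s : G => dist (s +ᵥ z) (s +ᵥ w) := fun z w =>
    (continuous_id.vadd continuous_const).dist (continuous_id.vadd continuous_const)
  -- the target value
  set W := weylDist μ B N x (t +ᵥ x) with hW
  -- obtain a sequence in the orbit converging to y
  obtain ⟨v, hvmem, hvlim⟩ := mem_closure_iff_seq_limit.mp hy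
  choose r hr using hvmem
  -- each average over a translate for the points rₖ +ᵥ x is at most W
  have hbddx : BddAbove (Set.range fun u : G =>
      (μ (B N)).toReal⁻¹ * ∫ s in u +ᵥ B N, dist (s +ᵥ x) (s +ᵥ (t +ᵥ x)) ∂μ) :=
    bddAbove_avg_translate μ B N hfin hC0 (hCb _ _) (hcont x (t +ᵥ x)).aestronglyMeasurable
  have hk_le : ∀ (k : ℕ) (u : G),
      (μ (B N)).toReal⁻¹ * ∫ s in u +ᵥ B N, dist (s +ᵥ v k) (s +ᵥ (t +ᵥ v k)) ∂μ ≤ W := by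
    intro k u
    have hvk : v k = r k +ᵥ x := (hr k).symm
    have heq : ∀ s : G, dist (s +ᵥ v k) (s +ᵥ (t +ᵥ v k))
        = dist ((s + r k) +ᵥ x) ((s + r k) +ᵥ (t +ᵥ x)) := by
      intro s
      rw [hvk]
      congr 1
      · rw [vadd_vadd]
      · rw [vadd_vadd, vadd_vadd, vadd_vadd]
        congr 1
        abel
    have : ∫ s in u +ᵥ B N, dist (s +ᵥ v k) (s +ᵥ (t +ᵥ v k)) ∂μ
        = ∫ s in (u + r k) +ᵥ B N, dist (s +ᵥ x) (s +ᵥ (t +ᵥ x)) ∂μ := by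
      rw [show (fun s : G => dist (s +ᵥ v k) (s +ᵥ (t +ᵥ v k)))
          = fun s : G => dist ((s + r k) +ᵥ x) ((s + r k) +ᵥ (t +ᵥ x)) from funext heq]
      exact setIntegral_add_right μ B N (fun s => dist (s +ᵥ x) (s +ᵥ (t +ᵥ x))) (r k) u
    rw [this]
    exact le_ciSup hbddx (u + r k)
  -- lower semicontinuity: each average for y is a limit of averages for v k
  refine ciSup_le fun u => ?_
  have hμu : μ (u +ᵥ B N) < ⊤ := by
    rw [measure_vadd μ u (B N)]; exact lt_top_iff_ne_top.2 hfin
  have hlim : Tendsto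
      (fun k => ∫ s in u +ᵥ B N, dist (s +ᵥ v k) (s +ᵥ (t +ᵥ v k)) ∂μ) atTop
      (𝓝 (∫ s in u +ᵥ B N, dist (s +ᵥ y) (s +ᵥ (t +ᵥ y)) ∂μ)) := by
    refine tendsto_integral_of_dominated_convergence (fun _ => C)
      (fun k => ((hcont (v k) (t +ᵥ v k))).aestronglyMeasurable.restrict)
      (integrableOn_const hμu.ne) ?_ ?_
    · intro k
      exact Filter.Eventually.of_forall fun s => hCb _ _ s
    · refine Filter.Eventually.of_forall fun s => ?_
      have h1 : Tendsto (fun k => s +ᵥ v k) atTop (𝓝 (s +ᵥ y)) :=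
        ((continuous_const.vadd continuous_id).tendsto y).comp hvlim
      have h2 : Tendsto (fun k => s +ᵥ (t +ᵥ v k)) atTop (𝓝 (s +ᵥ (t +ᵥ y))) :=
        (((continuous_const.vadd continuous_id).comp
          (continuous_const.vadd continuous_id)).tendsto y).comp hvlim
      exact h1.dist h2
  have hlim' : Tendsto
      (fun k => (μ (B N)).toReal⁻¹ * ∫ s in u +ᵥ B N, dist (s +ᵥ v k) (s +ᵥ (t +ᵥ v k)) ∂μ)
      atTop (𝓝 ((μ (B N)).toReal⁻¹ * ∫ s in u +ᵥ B N, dist (s +ᵥ y) (s +ᵥ (t +ᵥ y)) ∂μ)) :=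
    hlim.const_mul _
  exact le_of_tendsto hlim' (Filter.Eventually.of_forall fun k => hk_le k u)

end Aux

/-- Weyl almost periodicity propagates to the orbit closure. -/
theorem statement_10
    {G : Type*} [AddCommGroup G] [TopologicalSpace G] [IsTopologicalAddGroup G] [T2Space G]
    [LocallyCompactSpace G] [SigmaCompactSpace G] [MeasurableSpace G] [BorelSpace G]
    (μ : Measure G) [μ.IsAddHaarMeasure] (B : ℕ → Set G) (hB : IsFolner μ B)
    {X : Type*} [MetricSpace X] [CompactSpace X] [AddAction G X] [ContinuousVAdd G X]
    (x : X) (hx : WeylAPPoint μ B x) :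
    ∀ y ∈ closure (orbitSet G x), WeylAPPoint μ B y := by
  intro y hy ε hε
  obtain ⟨N, K, hK, hA⟩ := hx ε hε
  refine ⟨N, K, hK, fun g => ?_⟩
  obtain ⟨a, ha, hga⟩ := hA g
  exact ⟨a, lt_of_le_of_lt (weylDist_orbitClosure_le μ B hB x y hy N a) ha, hga⟩

end APPaper
end
end

section
/- Let (X,G) be a dynamical system over a σ-compact locally compact abelian group G with a transitive point p ∈ X. Then the following are equivalent: (i) (X,G) is a weakly almost periodic dynamical system; (ii) every x ∈ X is a weakly almost periodic point; (iii) p is a weakly almost periodic point. -/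
open MeasureTheory Filter Topology Set Pointwise

noncomputable section

namespace APPaper

section Statement11Aux

variable {G : Type*} [AddCommGroup G] [UniformSpace G] [IsUniformAddGroup G]
variable {X : Type*} [MetricSpace X] [CompactSpace X] [AddAction G X] [ContinuousVAdd G X]

lemma norm_fnAlong_le (f : C(X, ℂ)) (x : X) : ‖fnAlong (G := G) f x‖ ≤ ‖f‖ :=
  BoundedContinuousFunction.norm_ofNormedAddCommGroup_le _ (norm_nonneg f) _

/-- The map `f ↦ f_x` as a continuous linear map `C(X,ℂ) →L[ℂ] C_b(G,ℂ)`. -/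
def phi (x : X) : C(X, ℂ) →L[ℂ] BoundedContinuousFunction G ℂ :=
  LinearMap.mkContinuous
    { toFun := fun f => fnAlong f x
      map_add' := fun f g => by ext t; simp [fnAlong]
      map_smul' := fun c f => by ext t; simp [fnAlong] }
    1 (fun f => by simpa using norm_fnAlong_le f x)

lemma uniformContinuous_vadd_orbit (x : X) : UniformContinuous fun t : G => t +ᵥ x := by
  have key : ∀ ε : ℝ, 0 < ε → ∃ V : Set G, IsOpen V ∧ (0 : G) ∈ V ∧
      ∀ u ∈ V, ∀ y : X, dist (u +ᵥ y) y < ε := by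
    intro ε hε
    have hcont : Continuous fun q : G × X => dist (q.1 +ᵥ q.2) q.2 :=
      (continuous_fst.vadd continuous_snd).dist continuous_snd
    have hopen : IsOpen {q : G × X | dist (q.1 +ᵥ q.2) q.2 < ε} :=
      isOpen_lt hcont continuous_const
    have hsub : ({0} : Set G) ×ˢ (Set.univ : Set X) ⊆ {q : G × X | dist (q.1 +ᵥ q.2) q.2 < ε} := by
      rintro ⟨u, y⟩ ⟨hu, -⟩
      simp only [Set.mem_singleton_iff] at hu
      subst hu
      simpa using hε
    obtain ⟨V, W, hV, hW, h0V, hXW, hVW⟩ :=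
      generalized_tube_lemma isCompact_singleton isCompact_univ hopen hsub
    exact ⟨V, hV, h0V rfl, fun u hu y =>
      hVW (show (u, y) ∈ V ×ˢ W from ⟨hu, hXW (Set.mem_univ y)⟩)⟩
  refine Metric.uniformity_basis_dist.tendsto_right_iff.mpr ?_
  intro ε hε
  obtain ⟨V, hVopen, h0V, hV⟩ := key ε hε
  have hmem : {p : G × G | p.2 - p.1 ∈ V} ∈ uniformity G := by
    rw [uniformity_eq_comap_nhds_zero G]
    exact preimage_mem_comap (hVopen.mem_nhds h0V)
  filter_upwards [hmem] with p hp
  have h2 : p.2 +ᵥ x = (p.2 - p.1) +ᵥ (p.1 +ᵥ x) := by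
    rw [vadd_vadd, sub_add_cancel]
  show dist (p.1 +ᵥ x) (p.2 +ᵥ x) < ε
  calc dist (p.1 +ᵥ x) (p.2 +ᵥ x) = dist ((p.2 - p.1) +ᵥ (p.1 +ᵥ x)) (p.1 +ᵥ x) := by
        rw [← h2, dist_comm]
    _ < ε := hV _ hp _

lemma uniformContinuous_fnAlong (f : C(X, ℂ)) (x : X) :
    UniformContinuous ⇑(fnAlong (G := G) f x) :=
  (CompactSpace.uniformContinuous_of_continuous f.continuous).comp
    (uniformContinuous_vadd_orbit x)

lemma norm_fnAlong (p : X) (hp : Dense (Set.range fun t : G => t +ᵥ p)) (f : C(X, ℂ)) :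
    ‖fnAlong (G := G) f p‖ = ‖f‖ := by
  refine le_antisymm (norm_fnAlong_le f p) ?_
  have h : ∀ x : X, ‖f x‖ ≤ ‖fnAlong (G := G) f p‖ := by
    have hclosed : IsClosed {x : X | ‖f x‖ ≤ ‖fnAlong (G := G) f p‖} :=
      isClosed_le f.continuous.norm continuous_const
    have horb : (Set.range fun t : G => t +ᵥ p) ⊆ {x : X | ‖f x‖ ≤ ‖fnAlong (G := G) f p‖} := by
      rintro x ⟨t, rfl⟩
      exact (fnAlong (G := G) f p).norm_coe_le_norm t
    intro x
    have hcl := closure_minimal horb hclosed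
    rw [hp.closure_eq] at hcl
    exact hcl (Set.mem_univ x)
  exact (ContinuousMap.norm_le f (norm_nonneg _)).mpr h

lemma fnAlong_translateCM (t : G) (f : C(X, ℂ)) (x : X) :
    fnAlong (G := G) (translateCM t f) x = translateB (-t) (fnAlong f x) := by
  ext s
  show f (t +ᵥ (s +ᵥ x)) = f ((s - -t) +ᵥ x)
  rw [sub_neg_eq_add, vadd_vadd, add_comm]

lemma range_translateB_neg (F : BoundedContinuousFunction G ℂ) :
    (Set.range fun t : G => translateB (-t) F) = Set.range fun t : G => translateB t F := by
  ext b
  constructor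
  · rintro ⟨t, rfl⟩; exact ⟨-t, rfl⟩
  · rintro ⟨t, rfl⟩; exact ⟨-t, by simp only [neg_neg]⟩

lemma image_phi (f : C(X, ℂ)) (x : X) :
    ⇑(phi (G := G) x) '' (Set.range fun t : G => translateCM t f)
      = Set.range fun t : G => translateB t (fnAlong (G := G) f x) := by
  have hfun : (⇑(phi (G := G) x) ∘ fun t : G => translateCM t f)
      = fun t : G => translateB (-t) (fnAlong (G := G) f x) :=
    funext fun t => fnAlong_translateCM t f x
  rw [← Set.range_comp, hfun, range_translateB_neg]

lemma injective_pairing (E : Type*) [NormedAddCommGroup E] [NormedSpace ℂ E] :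
    Function.Injective ⇑(topDualPairing ℂ E).flip := by
  intro a b hab
  rw [NormedSpace.eq_iff_forall_dual_eq ℂ]
  intro g
  exact LinearMap.congr_fun hab g

lemma t2_weakSpace (E : Type*) [NormedAddCommGroup E] [NormedSpace ℂ E] :
    T2Space (WeakSpace ℂ E) :=
  (WeakBilin.isEmbedding (injective_pairing E)).t2Space

lemma isometry_phi (p : X) (hp : Dense (Set.range fun t : G => t +ᵥ p)) :
    Isometry ⇑(phi (G := G) p) :=
  AddMonoidHomClass.isometry_of_norm _ (fun f => norm_fnAlong p hp f)

lemma exists_extension (p : X) (hp : Dense (Set.range fun t : G => t +ᵥ p))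
    (φ : C(X, ℂ) →L[ℂ] ℂ) :
    ∃ ψ : BoundedContinuousFunction G ℂ →L[ℂ] ℂ,
      ∀ f : C(X, ℂ), ψ (phi (G := G) p f) = φ f := by
  have hnorm : ∀ f : C(X, ℂ), ‖phi (G := G) p f‖ = ‖f‖ := fun f => norm_fnAlong p hp f
  have hinj : Function.Injective ⇑(phi (G := G) p) := (isometry_phi p hp).injective
  set L : C(X, ℂ) →ₗ[ℂ] BoundedContinuousFunction G ℂ := ↑(phi (G := G) p) with hL
  have hinjL : Function.Injective L := hinj
  set eqv := LinearEquiv.ofInjective L hinjL with heqv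
  have hsymm : ∀ m : LinearMap.range L, L (eqv.symm m) = (m : BoundedContinuousFunction G ℂ) := by
    intro m
    conv_rhs => rw [← eqv.apply_symm_apply m]
    simp [heqv, LinearEquiv.ofInjective_apply]
  have hsymm_norm : ∀ m : LinearMap.range L, ‖eqv.symm m‖ = ‖m‖ := by
    intro m
    rw [← hnorm (eqv.symm m)]
    show ‖L (eqv.symm m)‖ = ‖m‖
    rw [hsymm m]
    rfl
  set lM : ↥(LinearMap.range L) →ₗ[ℂ] ℂ :=
    φ.toLinearMap.comp (eqv.symm : ↥(LinearMap.range L) →ₗ[ℂ] C(X, ℂ)) with hlM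
  have hbound : ∀ m : ↥(LinearMap.range L), ‖lM m‖ ≤ ‖φ‖ * ‖m‖ := by
    intro m
    calc ‖φ (eqv.symm m)‖ ≤ ‖φ‖ * ‖eqv.symm m‖ := φ.le_opNorm _
      _ = ‖φ‖ * ‖m‖ := by rw [hsymm_norm]
  set lMc := LinearMap.mkContinuous lM ‖φ‖ hbound with hlMc
  obtain ⟨ψ, hψ, -⟩ := exists_extension_norm_eq (LinearMap.range L) lMc
  refine ⟨ψ, fun f => ?_⟩
  have hmem : phi (G := G) p f ∈ LinearMap.range L := ⟨f, rfl⟩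
  have hval := hψ ⟨phi (G := G) p f, hmem⟩
  have he : eqv.symm ⟨phi (G := G) p f, hmem⟩ = f := by
    have h1 : eqv f = ⟨phi (G := G) p f, hmem⟩ :=
      Subtype.ext (by simp [heqv, LinearEquiv.ofInjective_apply, hL])
    rw [← h1, eqv.symm_apply_apply]
  calc ψ (phi (G := G) p f) = lMc ⟨phi (G := G) p f, hmem⟩ := hval
    _ = φ (eqv.symm ⟨phi (G := G) p f, hmem⟩) := rfl
    _ = φ f := by rw [he]

lemma isInducing_phiW (p : X) (hp : Dense (Set.range fun t : G => t +ᵥ p)) :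
    Topology.IsInducing ⇑(WeakSpace.map (phi (G := G) p)) := by
  choose ψ hψ using fun φ : C(X, ℂ) →L[ℂ] ℂ => exists_extension p hp φ
  have hE : Topology.IsInducing fun (x : WeakSpace ℂ C(X, ℂ)) (y : C(X, ℂ) →L[ℂ] ℂ) =>
      (topDualPairing ℂ C(X, ℂ)).flip x y :=
    (WeakBilin.isEmbedding (injective_pairing C(X, ℂ))).toIsInducing
  have hgcont : Continuous fun (F : WeakSpace ℂ (BoundedContinuousFunction G ℂ))
      (φ : C(X, ℂ) →L[ℂ] ℂ) => (topDualPairing ℂ (BoundedContinuousFunction G ℂ)).flip F (ψ φ) :=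
    continuous_pi fun φ => WeakBilin.eval_continuous _ (ψ φ)
  refine Topology.IsInducing.of_comp (WeakSpace.map (phi (G := G) p)).continuous hgcont ?_
  have hcomp : ((fun (F : WeakSpace ℂ (BoundedContinuousFunction G ℂ))
        (φ : C(X, ℂ) →L[ℂ] ℂ) => (topDualPairing ℂ (BoundedContinuousFunction G ℂ)).flip F (ψ φ))
      ∘ ⇑(WeakSpace.map (phi (G := G) p)))
      = fun (x : WeakSpace ℂ C(X, ℂ)) (y : C(X, ℂ) →L[ℂ] ℂ) =>
        (topDualPairing ℂ C(X, ℂ)).flip x y := by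
    funext x
    funext φ
    exact hψ φ x
  rw [hcomp]
  exact hE

lemma isClosed_weak_range (p : X) (hp : Dense (Set.range fun t : G => t +ᵥ p)) :
    IsClosed (Set.range ⇑(WeakSpace.map (phi (G := G) p))) := by
  have hr : Set.range ⇑(WeakSpace.map (phi (G := G) p))
      = ⇑(toWeakSpace ℂ (BoundedContinuousFunction G ℂ)) '' (Set.range ⇑(phi (G := G) p)) := by
    rw [← Set.range_comp]
    rfl
  rw [hr]
  have hconv : Convex ℝ (Set.range ⇑(phi (G := G) p)) := by
    rintro x ⟨a, rfl⟩ y ⟨b, rfl⟩ s t hs ht hst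
    exact ⟨s • a + t • b, by simp [map_add, ContinuousLinearMap.map_smul_of_tower]⟩
  have hclosed : IsClosed (Set.range ⇑(phi (G := G) p)) :=
    (isometry_phi p hp).isClosedEmbedding.isClosed_range
  have hmz := hconv.toWeakSpace_closure (𝕜 := ℂ)
  rw [hclosed.closure_eq] at hmz
  exact closure_eq_iff_isClosed.mp hmz.symm

lemma image_phiW (f : C(X, ℂ)) (x : X) :
    ⇑(WeakSpace.map (phi (G := G) x)) ''
        (⇑(toWeakSpace ℂ C(X, ℂ)) '' Set.range fun t : G => translateCM t f)
      = ⇑(toWeakSpace ℂ (BoundedContinuousFunction G ℂ)) ''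
        (Set.range fun t : G => translateB t (fnAlong (G := G) f x)) := by
  rw [← image_phi f x]
  simp only [Set.image_image]
  rfl

lemma forward_point (hS : WeaklyAPSystem G X) (x : X) : WeaklyAPPoint G x := by
  intro f
  refine ⟨uniformContinuous_fnAlong f x, ?_⟩
  haveI : T2Space (WeakSpace ℂ (BoundedContinuousFunction G ℂ)) := t2_weakSpace _
  have hK := (hS f).image (WeakSpace.map (phi (G := G) x)).continuous
  refine IsCompact.of_isClosed_subset hK isClosed_closure ?_
  calc closure (⇑(toWeakSpace ℂ (BoundedContinuousFunction G ℂ)) ''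
        (Set.range fun t : G => translateB t (fnAlong (G := G) f x)))
      = closure (⇑(WeakSpace.map (phi (G := G) x)) ''
          (⇑(toWeakSpace ℂ C(X, ℂ)) '' Set.range fun t : G => translateCM t f)) := by
        rw [image_phiW]
    _ ⊆ _ := closure_minimal (Set.image_mono subset_closure) hK.isClosed

lemma backward_point (p : X) (hp : Dense (orbitSet G p)) (hP : WeaklyAPPoint G p) :
    WeaklyAPSystem G X := by
  intro f
  obtain ⟨-, hK⟩ := hP f
  have hp' : Dense (Set.range fun t : G => t +ᵥ p) := hp
  have hemb : Topology.IsEmbedding ⇑(WeakSpace.map (phi (G := G) p)) :=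
    ⟨isInducing_phiW p hp', fun a b hab => (isometry_phi p hp').injective hab⟩
  rw [hemb.isCompact_iff]
  have hclemb : Topology.IsClosedEmbedding ⇑(WeakSpace.map (phi (G := G) p)) :=
    ⟨hemb, isClosed_weak_range p hp'⟩
  refine IsCompact.of_isClosed_subset hK (hclemb.isClosedMap _ isClosed_closure) ?_
  calc ⇑(WeakSpace.map (phi (G := G) p)) ''
        closure (⇑(toWeakSpace ℂ C(X, ℂ)) '' Set.range fun t : G => translateCM t f)
      ⊆ closure (⇑(WeakSpace.map (phi (G := G) p)) ''
          (⇑(toWeakSpace ℂ C(X, ℂ)) '' Set.range fun t : G => translateCM t f)) :=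
        image_closure_subset_closure_image (WeakSpace.map (phi (G := G) p)).continuous
    _ = closure (⇑(toWeakSpace ℂ (BoundedContinuousFunction G ℂ)) ''
          (Set.range fun t : G => translateB t (fnAlong (G := G) f p))) := by
        rw [image_phiW]

end Statement11Aux

/-- For a system with a transitive point, weak almost periodicity of the
system is equivalent to weak almost periodicity of all (resp. one transitive) point. -/
theorem statement_11
    {G : Type*} [AddCommGroup G] [UniformSpace G] [IsUniformAddGroup G] [T2Space G]
    [LocallyCompactSpace G] [SigmaCompactSpace G]
    {X : Type*} [MetricSpace X] [CompactSpace X] [AddAction G X] [ContinuousVAdd G X]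
    (p : X) (hp : Dense (orbitSet G p)) :
    (WeaklyAPSystem G X ↔ ∀ x : X, WeaklyAPPoint G x) ∧
    (WeaklyAPSystem G X ↔ WeaklyAPPoint G p) := by
  have h2 : WeaklyAPPoint G p → WeaklyAPSystem G X := backward_point p hp
  exact ⟨⟨fun hS x => forward_point hS x, fun h => h2 (h p)⟩,
    ⟨fun hS => forward_point hS p, h2⟩⟩

end APPaper
end
end

section
/- Let (X,G) be a dynamical system over a σ-compact locally compact abelian group G with metric d. A point p ∈ X is a Bohr almost periodic point if and only if the function G → [0,∞), t ↦ d̄(p,tp), where d̄(y,z) := sup_{s∈G} d(sy,sz), is a Bohr almost periodic function. -/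
open MeasureTheory Filter Topology Set Pointwise

noncomputable section

namespace APPaper

section Statement15Aux

variable {G : Type*} [AddCommGroup G] [TopologicalSpace G] [IsTopologicalAddGroup G]
variable {X : Type*} [MetricSpace X] [CompactSpace X] [AddAction G X] [ContinuousVAdd G X]

lemma relDense_mono {A B : Set G} (h : RelDense A) (hAB : A ⊆ B) : RelDense B := by
  obtain ⟨K, hK, hc⟩ := h
  exact ⟨K, hK, fun g => (hc g).imp fun a ha => ⟨hAB ha.1, ha.2⟩⟩

lemma ciSup_comp_surj {f : G → ℝ} {φ : G → G} (hφ : Function.Surjective φ) :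
    (⨆ s, f (φ s)) = ⨆ s, f s := by
  have h : Set.range (f ∘ φ) = Set.range f := hφ.range_comp f
  simp only [iSup]
  rw [show (fun s => f (φ s)) = f ∘ φ from rfl, h]

/-- The function `t ↦ d̄(p, t p)` written with explicit group shifts. -/
def orbD (p : X) (t : G) : ℝ := ⨆ s : G, dist (s +ᵥ p) ((s + t) +ᵥ p)

lemma dist_bound (x y : X) : dist x y ≤ Metric.diam (Set.univ : Set X) :=
  Metric.dist_le_diam_of_mem isCompact_univ.isBounded trivial trivial

lemma bddDist (u v : G → X) : BddAbove (Set.range fun s => dist (u s) (v s)) :=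
  ⟨Metric.diam (Set.univ : Set X), by rintro _ ⟨s, rfl⟩; exact dist_bound _ _⟩

lemma orbD_nonneg (p : X) (t : G) : 0 ≤ orbD p t :=
  Real.iSup_nonneg fun _ => dist_nonneg

lemma dist_le_orbD (p : X) (u t : G) :
    dist (u +ᵥ p) ((u + t) +ᵥ p) ≤ orbD p t := by
  unfold orbD
  exact le_ciSup (bddDist (fun s : G => s +ᵥ p) (fun s : G => (s + t) +ᵥ p)) u

lemma orbD_zero (p : X) : orbD (G := G) p 0 = 0 := by
  haveI : Nonempty G := ⟨0⟩
  simp [orbD]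

lemma orbD_neg (p : X) (t : G) : orbD p (-t) = orbD p t := by
  unfold orbD
  rw [← ciSup_comp_surj (f := fun s => dist (s +ᵥ p) ((s + -t) +ᵥ p))
    (φ := fun s => s + t) (Equiv.addRight t).surjective]
  exact iSup_congr fun s => by rw [add_neg_cancel_right, dist_comm]

lemma orbD_add_le (p : X) (a b : G) : orbD p (a + b) ≤ orbD p a + orbD p b := by
  haveI : Nonempty G := ⟨0⟩
  refine ciSup_le fun s => ?_
  calc dist (s +ᵥ p) ((s + (a + b)) +ᵥ p)
      ≤ dist (s +ᵥ p) ((s + a) +ᵥ p) + dist ((s + a) +ᵥ p) ((s + (a + b)) +ᵥ p) :=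
        dist_triangle _ _ _
    _ ≤ orbD p a + orbD p b := by
        refine add_le_add (dist_le_orbD p s a) ?_
        have := dist_le_orbD p (s + a) b
        rwa [add_assoc] at this

lemma orbD_sup_abs (p : X) (t : G) :
    (⨆ s : G, ‖orbD p s - orbD p (s - t)‖) = orbD p t := by
  haveI : Nonempty G := ⟨0⟩
  have hub : ∀ s : G, ‖orbD p s - orbD p (s - t)‖ ≤ orbD p t := by
    intro s
    rw [Real.norm_eq_abs, abs_sub_le_iff]
    constructor
    · have h := orbD_add_le p (s - t) t
      rw [sub_add_cancel] at h
      linarith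
    · have h := orbD_add_le p s (-t)
      rw [orbD_neg, ← sub_eq_add_neg] at h
      linarith
  refine le_antisymm (ciSup_le hub) ?_
  have h0 : ‖orbD p t - orbD p (t - t)‖ ≤ ⨆ s : G, ‖orbD p s - orbD p (s - t)‖ :=
    le_ciSup ⟨orbD p t, by rintro _ ⟨s, rfl⟩; exact hub s⟩ t
  rwa [sub_self, orbD_zero, sub_zero, Real.norm_eq_abs, abs_of_nonneg (orbD_nonneg p t)] at h0

lemma supDist_eq_orbD (p : X) (t : G) : supDist G p (t +ᵥ p) = orbD p t := by
  unfold supDist orbD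
  exact iSup_congr fun s => by rw [vadd_vadd]

lemma bddF (p : X) (f : C(X, ℂ)) (u v : G → G) :
    BddAbove (Set.range fun s => ‖f (u s +ᵥ p) - f (v s +ᵥ p)‖) := by
  refine ⟨2 * ‖f‖, ?_⟩
  rintro _ ⟨s, rfl⟩
  calc ‖f (u s +ᵥ p) - f (v s +ᵥ p)‖ ≤ ‖f (u s +ᵥ p)‖ + ‖f (v s +ᵥ p)‖ := norm_sub_le _ _
    _ ≤ ‖f‖ + ‖f‖ := add_le_add (f.norm_coe_le_norm _) (f.norm_coe_le_norm _)
    _ = 2 * ‖f‖ := by ring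

lemma unifcont (p : X) (hp : BohrAPPoint G p) (f : C(X, ℂ)) {η : ℝ} (hη : 0 < η) :
    ∃ U : Set G, IsOpen U ∧ (0 : G) ∈ U ∧ (∀ δ ∈ U, -δ ∈ U) ∧
      ∀ δ ∈ U, ∀ s : G, ‖f (s +ᵥ p) - f ((s - δ) +ᵥ p)‖ ≤ η := by
  obtain ⟨K, hKc, hKcov⟩ := hp f (η / 3) (by linarith)
  have hW : Continuous fun q : G × G => ‖f (q.1 +ᵥ p) - f ((q.1 - q.2) +ᵥ p)‖ := by
    apply Continuous.norm
    exact (f.continuous.comp (continuous_fst.vadd continuous_const)).sub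
      (f.continuous.comp ((continuous_fst.sub continuous_snd).vadd continuous_const))
  have hOopen : IsOpen {q : G × G | ‖f (q.1 +ᵥ p) - f ((q.1 - q.2) +ᵥ p)‖ < η / 3} :=
    isOpen_lt hW continuous_const
  have hsub : K ×ˢ ({0} : Set G) ⊆
      {q : G × G | ‖f (q.1 +ᵥ p) - f ((q.1 - q.2) +ᵥ p)‖ < η / 3} := by
    rintro ⟨κ, δ⟩ ⟨hk, hδ⟩
    simp only [Set.mem_singleton_iff] at hδ
    subst hδ
    simp only [Set.mem_setOf_eq, sub_zero, sub_self, norm_zero]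
    linarith
  obtain ⟨u, v, hu, hv, hKu, h0v, huv⟩ :=
    generalized_tube_lemma hKc isCompact_singleton hOopen hsub
  have h0 : (0 : G) ∈ v := h0v rfl
  refine ⟨v ∩ (fun x : G => -x) ⁻¹' v, hv.inter (hv.preimage continuous_neg),
    ⟨h0, by simpa using h0⟩, ?_, ?_⟩
  · rintro δ ⟨h1, h2⟩
    exact ⟨h2, by simpa using h1⟩
  · rintro δ ⟨hδv, -⟩ s
    obtain ⟨a, ha, hk⟩ := hKcov s
    simp only [Set.mem_setOf_eq] at ha
    have h1 : ‖f (s +ᵥ p) - f ((s - a) +ᵥ p)‖ < η / 3 := by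
      refine lt_of_le_of_lt ?_ ha
      exact le_ciSup (bddF p f (fun u => u) (fun u => u - a)) s
    have hin : ((s - a, δ) : G × G) ∈ u ×ˢ v := ⟨hKu hk, hδv⟩
    have h2 := huv hin
    simp only [Set.mem_setOf_eq] at h2
    have h3 : ‖f ((s - δ) +ᵥ p) - f ((s - δ - a) +ᵥ p)‖ < η / 3 := by
      refine lt_of_le_of_lt ?_ ha
      exact le_ciSup (bddF p f (fun u => u) (fun u => u - a)) (s - δ)
    have e : f (s +ᵥ p) - f ((s - δ) +ᵥ p) =
        (f (s +ᵥ p) - f ((s - a) +ᵥ p)) + (f ((s - a) +ᵥ p) - f ((s - a - δ) +ᵥ p)) +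
          (f ((s - δ - a) +ᵥ p) - f ((s - δ) +ᵥ p)) := by
      rw [sub_right_comm]
      ring
    rw [e]
    have h3' : ‖f ((s - δ - a) +ᵥ p) - f ((s - δ) +ᵥ p)‖ < η / 3 := by
      rwa [norm_sub_rev] at h3
    calc ‖(f (s +ᵥ p) - f ((s - a) +ᵥ p)) + (f ((s - a) +ᵥ p) - f ((s - a - δ) +ᵥ p)) +
          (f ((s - δ - a) +ᵥ p) - f ((s - δ) +ᵥ p))‖
        ≤ ‖f (s +ᵥ p) - f ((s - a) +ᵥ p)‖ + ‖f ((s - a) +ᵥ p) - f ((s - a - δ) +ᵥ p)‖ +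
          ‖f ((s - δ - a) +ᵥ p) - f ((s - δ) +ᵥ p)‖ := norm_add₃_le
      _ ≤ η := by linarith

lemma totbdd (p : X) (hp : BohrAPPoint G p) (f : C(X, ℂ)) {η : ℝ} (hη : 0 < η) :
    ∃ T : Finset G, ∀ g : G, ∃ τ ∈ T, ∀ s : G,
      ‖f ((s - g) +ᵥ p) - f ((s - τ) +ᵥ p)‖ ≤ η := by
  obtain ⟨U, hUo, hU0, hUsymm, hU⟩ := unifcont p hp f (show (0:ℝ) < η / 2 by linarith)
  obtain ⟨K, hKc, hKcov⟩ := hp f (η / 2) (by linarith)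
  have hcov : K ⊆ ⋃ τ : G, (fun x => x - τ) ⁻¹' U := fun κ _ =>
    Set.mem_iUnion.2 ⟨κ, by simpa using hU0⟩
  obtain ⟨T, hT⟩ := hKc.elim_finite_subcover _
    (fun τ => hUo.preimage (continuous_sub_right τ)) hcov
  refine ⟨T, fun g => ?_⟩
  obtain ⟨a, ha, hk⟩ := hKcov g
  simp only [Set.mem_setOf_eq] at ha
  have hmem := hT hk
  rw [Set.mem_iUnion₂] at hmem
  obtain ⟨τ, hτT, hτU⟩ := hmem
  refine ⟨τ, hτT, fun s => ?_⟩
  have hUneg : τ - (g - a) ∈ U := by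
    have := hUsymm _ hτU
    rwa [neg_sub] at this
  have h1 : ‖f ((s - (g - a)) +ᵥ p) - f ((s - (g - a) - a) +ᵥ p)‖ < η / 2 := by
    refine lt_of_le_of_lt ?_ ha
    exact le_ciSup (bddF p f (fun u => u) (fun u => u - a)) (s - (g - a))
  have h2 : ‖f ((s - (g - a)) +ᵥ p) - f ((s - (g - a) - (τ - (g - a))) +ᵥ p)‖ ≤ η / 2 :=
    hU _ hUneg (s - (g - a))
  have e1 : s - g = s - (g - a) - a := by abel
  have e2 : s - τ = s - (g - a) - (τ - (g - a)) := by abel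
  rw [e1, e2]
  calc ‖f ((s - (g - a) - a) +ᵥ p) - f ((s - (g - a) - (τ - (g - a))) +ᵥ p)‖
      ≤ ‖f ((s - (g - a) - a) +ᵥ p) - f ((s - (g - a)) +ᵥ p)‖ +
        ‖f ((s - (g - a)) +ᵥ p) - f ((s - (g - a) - (τ - (g - a))) +ᵥ p)‖ := by
        have := dist_triangle (f ((s - (g - a) - a) +ᵥ p)) (f ((s - (g - a)) +ᵥ p))
          (f ((s - (g - a) - (τ - (g - a))) +ᵥ p))
        simpa [dist_eq_norm] using this
    _ ≤ η / 2 + η / 2 := by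
        refine add_le_add ?_ h2
        rw [norm_sub_rev]
        exact le_of_lt h1
    _ = η := by linarith

lemma jointTotbdd (p : X) (hp : BohrAPPoint G p) (Y : Finset X) {η : ℝ} (hη : 0 < η) :
    ∃ T : Finset G, ∀ g : G, ∃ τ ∈ T, ∀ y ∈ Y, ∀ s : G,
      |dist ((s - g) +ᵥ p) y - dist ((s - τ) +ᵥ p) y| ≤ η := by
  classical
  set F : X → C(X, ℂ) := fun y =>
    ⟨fun x => (dist x y : ℂ), Complex.continuous_ofReal.comp (Continuous.dist continuous_id continuous_const)⟩ with hF
  have hFnorm : ∀ (y : X) (x x' : X), ‖F y x - F y x'‖ = |dist x y - dist x' y| := by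
    intro y x x'
    rw [hF]
    simp only [ContinuousMap.coe_mk]
    rw [← Complex.ofReal_sub, Complex.norm_real, Real.norm_eq_abs]
  have hper : ∀ y : X, ∃ T : Finset G, ∀ g : G, ∃ τ ∈ T, ∀ s : G,
      |dist ((s - g) +ᵥ p) y - dist ((s - τ) +ᵥ p) y| ≤ η / 2 := by
    intro y
    obtain ⟨T, hT⟩ := totbdd p hp (F y) (show (0:ℝ) < η / 2 by linarith)
    refine ⟨T, fun g => ?_⟩
    obtain ⟨τ, hτ, hb⟩ := hT g
    exact ⟨τ, hτ, fun s => by rw [← hFnorm]; exact hb s⟩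
  choose T τfun hmem hbound using hper
  set c : G → (↥Y → G) := fun g y => τfun y.1 g with hc
  have hrange : (Set.range c).Finite := by
    refine Set.Finite.subset (Set.Finite.pi fun y : ↥Y => (T y.1).finite_toSet) ?_
    rintro _ ⟨g, rfl⟩
    rw [Set.mem_univ_pi]
    exact fun y => hmem y.1 g
  set sec : (↥Y → G) → G := fun w => if h : w ∈ Set.range c then h.choose else 0 with hsec
  refine ⟨hrange.toFinset.image sec, fun g => ?_⟩
  have hgmem : c g ∈ Set.range c := ⟨g, rfl⟩
  set r : G := sec (c g) with hr
  have hcr : c r = c g := by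
    rw [hr, hsec]
    simp only [dif_pos hgmem]
    exact hgmem.choose_spec
  refine ⟨r, Finset.mem_image_of_mem sec (hrange.mem_toFinset.2 hgmem), fun y hy s => ?_⟩
  have h1 := hbound y g s
  have h2 := hbound y r s
  have heq : τfun y r = τfun y g := congrFun hcr ⟨y, hy⟩
  rw [heq] at h2
  calc |dist ((s - g) +ᵥ p) y - dist ((s - r) +ᵥ p) y|
      ≤ |dist ((s - g) +ᵥ p) y - dist ((s - τfun y g) +ᵥ p) y| +
        |dist ((s - τfun y g) +ᵥ p) y - dist ((s - r) +ᵥ p) y| := abs_sub_le _ _ _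
    _ ≤ η / 2 + η / 2 := add_le_add h1 (by rw [abs_sub_comm]; exact h2)
    _ = η := by linarith

lemma bohrAPPoint_orbD (p : X) (hp : BohrAPPoint G p) :
    ∀ ε : ℝ, 0 < ε → RelDense {t : G | orbD p t < ε} := by
  intro ε hε
  haveI : Nonempty G := ⟨0⟩
  obtain ⟨tset, -, htfin, htcov⟩ :=
    finite_cover_balls_of_compact (isCompact_univ (X := X)) (show (0:ℝ) < ε / 8 by linarith)
  obtain ⟨T, hT⟩ := jointTotbdd p hp htfin.toFinset (show (0:ℝ) < ε / 4 by linarith)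
  refine ⟨T, T.finite_toSet.isCompact, fun g => ?_⟩
  obtain ⟨τ, hτT, hτ⟩ := hT g
  refine ⟨g - τ, ?_, by simpa using hτT⟩
  have key : ∀ u : G, dist (u +ᵥ p) ((u + (g - τ)) +ᵥ p) ≤ ε / 2 := by
    intro u
    obtain ⟨y, hy, hyd⟩ : ∃ y ∈ htfin.toFinset, dist (u +ᵥ p) y < ε / 8 := by
      have hm := htcov (Set.mem_univ (u +ᵥ p))
      rw [Set.mem_iUnion₂] at hm
      obtain ⟨y, hyt, hyb⟩ := hm
      exact ⟨y, htfin.mem_toFinset.2 hyt, Metric.mem_ball.1 hyb⟩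
    have hb := hτ y hy (u + g)
    have e1 : u + g - g = u := by abel
    have e2 : u + g - τ = u + (g - τ) := by abel
    rw [e1, e2] at hb
    have h2 : dist ((u + (g - τ)) +ᵥ p) y - dist (u +ᵥ p) y ≤ ε / 4 :=
      (abs_sub_le_iff.mp hb).2
    calc dist (u +ᵥ p) ((u + (g - τ)) +ᵥ p)
        ≤ dist (u +ᵥ p) y + dist ((u + (g - τ)) +ᵥ p) y := dist_triangle_right _ _ _
      _ ≤ ε / 2 := by linarith
  show orbD p (g - τ) < ε
  calc orbD p (g - τ) ≤ ε / 2 := ciSup_le key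
    _ < ε := by linarith

lemma orbD_bohrAPPoint (p : X) (H : ∀ ε : ℝ, 0 < ε → RelDense {t : G | orbD p t < ε}) :
    BohrAPPoint G p := by
  intro f ε hε
  haveI : Nonempty G := ⟨0⟩
  have huc : UniformContinuous f := CompactSpace.uniformContinuous_of_continuous f.continuous
  obtain ⟨δ, hδ, hδ'⟩ := Metric.uniformContinuous_iff.mp huc (ε / 2) (by linarith)
  refine relDense_mono (H δ hδ) ?_
  intro t ht
  simp only [Set.mem_setOf_eq] at ht ⊢
  have hb : ∀ s : G, ‖f (s +ᵥ p) - f ((s - t) +ᵥ p)‖ ≤ ε / 2 := by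
    intro s
    have h1 : dist (s +ᵥ p) ((s - t) +ᵥ p) < δ := by
      have hd := dist_le_orbD p s (-t)
      rw [← sub_eq_add_neg] at hd
      calc dist (s +ᵥ p) ((s - t) +ᵥ p) ≤ orbD p (-t) := hd
        _ = orbD p t := orbD_neg p t
        _ < δ := ht
    have := hδ' h1
    rw [dist_eq_norm] at this
    linarith
  calc (⨆ s : G, ‖f (s +ᵥ p) - f ((s - t) +ᵥ p)‖) ≤ ε / 2 := ciSup_le hb
    _ < ε := by linarith

end Statement15Aux

/-- A point `p` is Bohr almost periodic iff `t ↦ d̄(p, t p)` is a Bohr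
almost periodic function. -/
theorem statement_15
    {G : Type*} [AddCommGroup G] [TopologicalSpace G] [IsTopologicalAddGroup G] [T2Space G]
    [LocallyCompactSpace G] [SigmaCompactSpace G]
    {X : Type*} [MetricSpace X] [CompactSpace X] [AddAction G X] [ContinuousVAdd G X]
    (p : X) :
    BohrAPPoint G p ↔ BohrAPFun fun t : G => supDist G p (t +ᵥ p) := by
  have hfun : (fun t : G => supDist G p (t +ᵥ p)) = fun t => orbD p t :=
    funext (supDist_eq_orbD p)
  rw [hfun]
  constructor
  · intro hp ε hε
    refine relDense_mono (bohrAPPoint_orbD p hp ε hε) ?_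
    intro t ht
    simp only [Set.mem_setOf_eq] at ht ⊢
    rw [orbD_sup_abs]
    exact ht
  · intro hB
    apply orbD_bohrAPPoint
    intro ε hε
    refine relDense_mono (hB ε hε) ?_
    intro t ht
    simp only [Set.mem_setOf_eq] at ht ⊢
    rwa [orbD_sup_abs] at ht

end APPaper
end
end
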